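/- arXiv:1412.1972 — 10 statements merged into one kernel-verified Lean document; each statement's English description precedes it below -/
import Mathlib

section
/- Let p be a probability distribution on ℕ with p_0 > 0 and μ_p ≤ 1. If a sequence H : ℕ → [0,1] satisfies H(n) = Σ_{m≤n} p_m H(n)^m for all n, then H is non-decreasing. -/
open Finset

lemma pow_sub_pow_le_aux (x y : ℝ) (hx : 0 ≤ x) (hxy : x ≤ y) (hy : y ≤ 1) :
    ∀ m : ℕ, y ^ m - x ^ m ≤ m * (y - x) := by
  intro m
  induction m with
  | zero => simp
  | succ k ih =>
      have hxk : x ^ k ≤ 1 := pow_le_one₀ hx (hxy.trans hy)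
      have hyk : (0:ℝ) ≤ y ^ k - x ^ k := by
        have := pow_le_pow_left₀ hx hxy k
        linarith
      have h1 : y * (y ^ k - x ^ k) ≤ y ^ k - x ^ k := by nlinarith
      have h2 : x ^ k * (y - x) ≤ y - x := by nlinarith
      have : y ^ (k+1) - x ^ (k+1) = y * (y ^ k - x ^ k) + x ^ k * (y - x) := by ring
      push_cast
      nlinarith

lemma pow_sub_pow_lt_aux (x y : ℝ) (hx : 0 ≤ x) (hxy : x < y) (hy : y ≤ 1) :
    ∀ m : ℕ, 2 ≤ m → y ^ m - x ^ m < m * (y - x) := by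
  intro m
  induction m with
  | zero => omega
  | succ k ih =>
      intro hk
      rcases Nat.lt_or_ge k 2 with hk2 | hk2
      · -- k + 1 = 2
        interval_cases k
        · omega
        · push_cast; nlinarith
      · have ihk := ih hk2
        have hxk : x ^ k ≤ 1 := pow_le_one₀ hx (hxy.le.trans hy)
        have hyk : (0:ℝ) ≤ y ^ k - x ^ k := by
          have := pow_le_pow_left₀ hx hxy.le k
          linarith
        have h1 : y * (y ^ k - x ^ k) ≤ y ^ k - x ^ k := by nlinarith
        have h2 : x ^ k * (y - x) ≤ y - x := by nlinarith
        have he : y ^ (k+1) - x ^ (k+1) = y * (y ^ k - x ^ k) + x ^ k * (y - x) := by ring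
        push_cast
        nlinarith

lemma key_lemma (p : ℕ → ℝ) (hp : ∀ k, 0 ≤ p k) (hsum : ∑' k, p k = 1)
    (hp0 : 0 < p 0) (hmeanS : Summable fun k : ℕ => (k : ℝ) * p k)
    (hmean : ∑' k : ℕ, (k : ℝ) * p k ≤ 1)
    (x y : ℝ) (hx : 0 ≤ x) (hxy : x < y) (hy : y ≤ 1) (n : ℕ) :
    ∑ m ∈ range (n + 2), p m * (y ^ m - x ^ m) < y - x := by
  have hpsummable : Summable p := by
    by_contra h
    rw [tsum_eq_zero_of_not_summable h] at hsum
    norm_num at hsum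
  have hpartialmean : ∑ m ∈ range (n + 2), (m : ℝ) * p m ≤ 1 := by
    calc ∑ m ∈ range (n + 2), (m : ℝ) * p m
        ≤ ∑' k : ℕ, (k : ℝ) * p k := by
          apply Summable.sum_le_tsum _ (fun i _ => mul_nonneg (by positivity) (hp i)) hmeanS
      _ ≤ 1 := hmean
  by_cases hB : ∃ m ∈ range (n + 2), 2 ≤ m ∧ 0 < p m
  · -- some p m > 0 with m ≥ 2 : strict term bound
    obtain ⟨m₀, hm₀mem, hm₀2, hm₀pos⟩ := hB
    have hlt : ∑ m ∈ range (n + 2), p m * (y ^ m - x ^ m)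
        < ∑ m ∈ range (n + 2), p m * ((m : ℝ) * (y - x)) := by
      apply Finset.sum_lt_sum
      · intro i _
        have := pow_sub_pow_le_aux x y hx hxy.le hy i
        have hpi := hp i
        nlinarith
      · refine ⟨m₀, hm₀mem, ?_⟩
        have := pow_sub_pow_lt_aux x y hx hxy hy m₀ hm₀2
        nlinarith
    have heq : ∑ m ∈ range (n + 2), p m * ((m : ℝ) * (y - x))
        = (∑ m ∈ range (n + 2), (m : ℝ) * p m) * (y - x) := by
      rw [Finset.sum_mul]
      apply Finset.sum_congr rfl
      intro i _; ring
    have hxy' : 0 < y - x := by linarith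
    calc ∑ m ∈ range (n + 2), p m * (y ^ m - x ^ m)
        < (∑ m ∈ range (n + 2), (m : ℝ) * p m) * (y - x) := by rw [← heq]; exact hlt
      _ ≤ 1 * (y - x) := by
          apply mul_le_mul_of_nonneg_right hpartialmean hxy'.le
      _ = y - x := one_mul _
  · -- all p m = 0 for 2 ≤ m ≤ n+1 : sum is p 1 * (y - x), and p 1 < 1
    push_neg at hB
    have hzero : ∀ m ∈ range (n + 2), 2 ≤ m → p m = 0 := by
      intro m hm h2
      have := hB m hm h2
      have := hp m
      linarith
    have hsum1 : ∑ m ∈ range (n + 2), p m * (y ^ m - x ^ m) = p 1 * (y - x) := by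
      rw [Finset.sum_eq_single_of_mem 1 (Finset.mem_range.mpr (by omega))]
      · ring_nf
      · intro b hb hb1
        rcases Nat.eq_zero_or_pos b with rfl | hbpos
        · simp
        · have hb2 : 2 ≤ b := by omega
          rw [hzero b hb hb2]; ring
    have hp1 : p 1 < 1 := by
      have h01 : p 0 + p 1 ≤ 1 := by
        have : ∑ m ∈ range 2, p m ≤ ∑' k, p k :=
          Summable.sum_le_tsum _ (fun i _ => hp i) hpsummable
        rw [hsum] at this
        simpa [Finset.sum_range_succ] using this
      linarith
    rw [hsum1]
    have hxy' : 0 < y - x := by linarith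
    nlinarith [hp 1]

/-- If `p` is a pmf on ℕ with `p 0 > 0` and mean `≤ 1`, and `H : ℕ → [0,1]`
satisfies the fixed-point equation `H n = Σ_{m≤n} p m · (H n)^m` for all `n`,
then `H` is non-decreasing. -/
theorem H_monotone (p : ℕ → ℝ) (hp : ∀ k, 0 ≤ p k) (hsum : ∑' k, p k = 1)
    (hp0 : 0 < p 0) (hmeanS : Summable fun k : ℕ => (k : ℝ) * p k)
    (hmean : ∑' k : ℕ, (k : ℝ) * p k ≤ 1)
    (H : ℕ → ℝ) (hH : ∀ n, H n ∈ Set.Icc (0 : ℝ) 1)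
    (hfix : ∀ n, H n = ∑ m ∈ Finset.range (n + 1), p m * H n ^ m) :
    Monotone H := by
  apply monotone_nat_of_le_succ
  intro n
  by_contra hcon
  push_neg at hcon
  set x := H (n + 1) with hxdef
  set y := H n with hydef
  have hx0 : 0 ≤ x := (hH (n + 1)).1
  have hy1 : y ≤ 1 := (hH n).2
  have hfy : y = ∑ m ∈ range (n + 1), p m * y ^ m := hfix n
  have hfx : x = ∑ m ∈ range (n + 2), p m * x ^ m := hfix (n + 1)
  have hyle : y ≤ ∑ m ∈ range (n + 2), p m * y ^ m := by
    rw [Finset.sum_range_succ, ← hfy]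
    have : 0 ≤ p (n + 1) * y ^ (n + 1) := by
      apply mul_nonneg (hp _)
      exact pow_nonneg (le_trans hx0 hcon.le) _
    linarith
  have hdiff : y - x ≤ ∑ m ∈ range (n + 2), p m * (y ^ m - x ^ m) := by
    have : ∑ m ∈ range (n + 2), p m * (y ^ m - x ^ m)
        = (∑ m ∈ range (n + 2), p m * y ^ m) - ∑ m ∈ range (n + 2), p m * x ^ m := by
      rw [← Finset.sum_sub_distrib]
      apply Finset.sum_congr rfl
      intro i _; ring
    rw [this, ← hfx]
    linarith
  have := key_lemma p hp hsum hp0 hmeanS hmean x y hx0 hcon hy1 n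
  linarith
end

section
/- Let p be a pmf on ℕ and let H : ℕ → [0,1] satisfy H(n) = Σ_{m≤n} p_m H(n)^m for all n. Set q_n = H(n) − H(n−1) for n ≥ 1. Then for all n ≥ 1: q_n · (1 − Σ_{1≤m≤n−1} p_m Σ_{1≤i≤m} H(n)^{m−i} H(n−1)^{i−1}) = p_n · H(n)^n. -/
open Finset

lemma pow_sub_pow_eq (a b : ℝ) (m : ℕ) :
    a ^ m - b ^ m = (a - b) * ∑ i ∈ Finset.Icc 1 m, a ^ (m - i) * b ^ (i - 1) := by
  rw [show Finset.Icc 1 m = Finset.Ico 1 (m + 1) by rw [Finset.Ico_add_one_right_eq_Icc],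
    Finset.sum_Ico_eq_sum_range]
  simp only [Nat.add_sub_cancel]
  have h1 : ∀ i ∈ Finset.range m, a ^ (m - (1 + i)) * b ^ (1 + i - 1)
      = a ^ (m - 1 - i) * b ^ i := by
    intro i hi
    congr 2
    · omega
    · omega
  rw [Finset.sum_congr rfl h1, ← Finset.sum_range_reflect]
  have h2 : ∀ i ∈ Finset.range m, a ^ (m - 1 - (m - 1 - i)) * b ^ (m - 1 - i)
      = a ^ i * b ^ (m - 1 - i) := by
    intro i hi
    simp only [Finset.mem_range] at hi
    congr 2
    omega
  rw [Finset.sum_congr rfl h2, ← geom_sum₂_mul a b m]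
  ring

/-- The key recursion relating the point masses `q n = H n − H (n−1)` of the
maximal out-degree of a Galton-Watson tree to the offspring distribution `p`:
`q_n · (1 − Σ_{1≤m≤n−1} p m Σ_{1≤i≤m} H(n)^{m−i} H(n−1)^{i−1}) = p n · H(n)^n`. -/
theorem key_recursion (p : ℕ → ℝ) (hp : ∀ k, 0 ≤ p k) (hsum : ∑' k, p k = 1)
    (H : ℕ → ℝ) (hH : ∀ n, H n ∈ Set.Icc (0 : ℝ) 1)
    (hfix : ∀ n, H n = ∑ m ∈ Finset.range (n + 1), p m * H n ^ m) :
    ∀ n : ℕ, 1 ≤ n →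
      (H n - H (n - 1)) *
          (1 - ∑ m ∈ Finset.Icc 1 (n - 1), p m *
            ∑ i ∈ Finset.Icc 1 m, H n ^ (m - i) * H (n - 1) ^ (i - 1)) =
        p n * H n ^ n := by
  intro n hn
  have h1 : H n = ∑ m ∈ Finset.range n, p m * H n ^ m + p n * H n ^ n := by
    conv_lhs => rw [hfix n, Finset.sum_range_succ]
  have h2 : H (n - 1) = ∑ m ∈ Finset.range n, p m * H (n - 1) ^ m := by
    conv_lhs => rw [hfix (n - 1)]
    rw [show n - 1 + 1 = n by omega]
  have h3 : H n - H (n - 1)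
      = ∑ m ∈ Finset.range n, (p m * H n ^ m - p m * H (n - 1) ^ m) + p n * H n ^ n := by
    rw [Finset.sum_sub_distrib]
    linear_combination h1 - h2
  have h4 : ∑ m ∈ Finset.range n, (p m * H n ^ m - p m * H (n - 1) ^ m)
      = (H n - H (n - 1)) * ∑ m ∈ Finset.range n,
          p m * ∑ i ∈ Finset.Icc 1 m, H n ^ (m - i) * H (n - 1) ^ (i - 1) := by
    rw [Finset.mul_sum]
    apply Finset.sum_congr rfl
    intro m hm
    have := pow_sub_pow_eq (H n) (H (n - 1)) m
    linear_combination p m * this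
  have h5 : ∑ m ∈ Finset.range n,
        p m * ∑ i ∈ Finset.Icc 1 m, H n ^ (m - i) * H (n - 1) ^ (i - 1)
      = ∑ m ∈ Finset.Icc 1 (n - 1),
        p m * ∑ i ∈ Finset.Icc 1 m, H n ^ (m - i) * H (n - 1) ^ (i - 1) := by
    rw [Finset.range_eq_Ico, Finset.sum_eq_sum_Ico_succ_bot (by omega : 0 < n)]
    have he : Finset.Icc 1 0 = (∅ : Finset ℕ) := by simp
    rw [he, Finset.sum_empty, mul_zero, zero_add]
    apply Finset.sum_congr _ (fun _ _ => rfl)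
    ext x
    simp only [Finset.mem_Ico, Finset.mem_Icc]
    omega
  rw [h5] at h4
  linear_combination h3 + h4
end

section
/- Let p be a pmf on ℕ with mean μ_p < 1, and let H : ℕ → [0,1] be non-decreasing with H(n) = Σ_{m≤n} p_m H(n)^m for all n. Then for every n ≥ 1, (H(n) − H(n−1))·(1 − μ_p) ≤ p_n. -/
open Finset

lemma pow_sub_pow_le_nsmul (a b : ℝ) (hb : 0 ≤ b) (hba : b ≤ a) (ha : a ≤ 1) :
    ∀ m : ℕ, a ^ m - b ^ m ≤ m * (a - b) := by
  intro m
  induction m with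
  | zero => simp
  | succ m ih =>
    have hbm : b ^ m ≤ 1 := pow_le_one₀ hb (hba.trans ha)
    have hbm0 : 0 ≤ b ^ m := pow_nonneg hb m
    have key : a ^ (m + 1) - b ^ (m + 1) = a * (a ^ m - b ^ m) + (a - b) * b ^ m := by
      ring
    rw [key]
    have h1 : a * (a ^ m - b ^ m) ≤ a ^ m - b ^ m := by
      have hnn : 0 ≤ a ^ m - b ^ m := sub_nonneg.2 (pow_le_pow_left₀ hb hba m)
      nlinarith
    have h2 : (a - b) * b ^ m ≤ (a - b) := by
      have : 0 ≤ a - b := sub_nonneg.2 hba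
      nlinarith
    push_cast
    nlinarith

/-- For a sub-critical pmf `p` and the non-decreasing solution `H` of the
fixed-point equation, the point mass `q n = H n − H (n−1)` satisfies
`q n · (1 − μ_p) ≤ p n`. -/
theorem q_le_p_div (p : ℕ → ℝ) (hp : ∀ k, 0 ≤ p k) (hsum : ∑' k, p k = 1)
    (hmeanS : Summable fun k : ℕ => (k : ℝ) * p k)
    (hmean : ∑' k : ℕ, (k : ℝ) * p k < 1)
    (H : ℕ → ℝ) (hH : ∀ n, H n ∈ Set.Icc (0 : ℝ) 1) (hmono : Monotone H)
    (hfix : ∀ n, H n = ∑ m ∈ Finset.range (n + 1), p m * H n ^ m) :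
    ∀ n : ℕ, 1 ≤ n →
      (H n - H (n - 1)) * (1 - ∑' k : ℕ, (k : ℝ) * p k) ≤ p n := by
  intro n hn
  set μ := ∑' k : ℕ, (k : ℝ) * p k with hμ
  set a := H n with ha
  set b := H (n - 1) with hb
  have hmem := hH n
  have hmem' := hH (n - 1)
  have ha0 : 0 ≤ a := hmem.1
  have ha1 : a ≤ 1 := hmem.2
  have hb0 : 0 ≤ b := hmem'.1
  have hba : b ≤ a := hmono (Nat.sub_le n 1)
  have hd0 : 0 ≤ a - b := sub_nonneg.2 hba
  have hn1 : n - 1 + 1 = n := Nat.succ_pred_eq_of_pos hn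
  have hfa : a = ∑ m ∈ Finset.range (n + 1), p m * a ^ m := hfix n
  have hfb : b = ∑ m ∈ Finset.range n, p m * b ^ m := by
    have := hfix (n - 1)
    rwa [hn1] at this
  have hpart : ∑ m ∈ Finset.range n, (m : ℝ) * p m ≤ μ :=
    Summable.sum_le_tsum _ (fun i _ => mul_nonneg (Nat.cast_nonneg i) (hp i)) hmeanS
  have key : a - b ≤ p n + (a - b) * μ := by
    have step : a - b = p n * a ^ n + ∑ m ∈ Finset.range n, (p m * a ^ m - p m * b ^ m) := by
      nth_rewrite 1 [hfa]
      nth_rewrite 1 [hfb]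
      rw [Finset.sum_range_succ, Finset.sum_sub_distrib]
      ring
    have hbd : ∑ m ∈ Finset.range n, (p m * a ^ m - p m * b ^ m)
        ≤ (∑ m ∈ Finset.range n, (m : ℝ) * p m) * (a - b) := by
      rw [Finset.sum_mul]
      apply Finset.sum_le_sum
      intro m _
      have := pow_sub_pow_le_nsmul a b hb0 hba ha1 m
      have hpm := hp m
      calc p m * a ^ m - p m * b ^ m = p m * (a ^ m - b ^ m) := by ring
        _ ≤ p m * ((m : ℝ) * (a - b)) := mul_le_mul_of_nonneg_left this hpm
        _ = (m : ℝ) * p m * (a - b) := by ring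
    have han : p n * a ^ n ≤ p n := by
      have : a ^ n ≤ 1 := pow_le_one₀ ha0 ha1
      nlinarith [hp n]
    have hμ0 : (∑ m ∈ Finset.range n, (m : ℝ) * p m) * (a - b) ≤ μ * (a - b) :=
      mul_le_mul_of_nonneg_right hpart hd0
    rw [step]
    nlinarith
  nlinarith
end

section
/- Let p be a sub-critical pmf on ℕ (μ_p < 1) with unbounded support, and let H : ℕ → [0,1] be non-decreasing with H(n) = Σ_{m≤n} p_m H(n)^m, H(n) → 1. Then 1 − H(n) = o(1/n), and consequently H(n)^n → 1 as n → ∞. -/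
open Filter Topology Finset

/-- For a sub-critical unbounded pmf `p` with maximal-out-degree cdf `H`,
one has `1 − H(n) = o(1/n)`, and consequently `H(n)^n → 1`. -/
theorem H_tail_little_o_and_Hn_pow_n (p : ℕ → ℝ) (hp : ∀ k, 0 ≤ p k)
    (hsum : ∑' k, p k = 1)
    (hmeanS : Summable fun k : ℕ => (k : ℝ) * p k)
    (hmean : ∑' k : ℕ, (k : ℝ) * p k < 1)
    (hunb : {n : ℕ | 0 < p n}.Infinite)
    (H : ℕ → ℝ) (hH : ∀ n, H n ∈ Set.Icc (0 : ℝ) 1) (hmono : Monotone H)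
    (hfix : ∀ n, H n = ∑ m ∈ Finset.range (n + 1), p m * H n ^ m)
    (hlim : Tendsto H atTop (𝓝 1)) :
    Tendsto (fun n : ℕ => (n : ℝ) * (1 - H n)) atTop (𝓝 0) ∧
      Tendsto (fun n : ℕ => H n ^ n) atTop (𝓝 1) := by
  set μ : ℝ := ∑' k : ℕ, (k : ℝ) * p k with hμdef
  have hpsum : Summable p := by
    by_contra h
    rw [tsum_eq_zero_of_not_summable h] at hsum
    norm_num at hsum
  have hgnn : ∀ k : ℕ, 0 ≤ (k : ℝ) * p k := fun k =>
    mul_nonneg (Nat.cast_nonneg k) (hp k)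
  have hμ0 : (0:ℝ) ≤ μ := tsum_nonneg hgnn
  have hεpos : (0:ℝ) < 1 - μ := by linarith
  have tail_eq : ∀ n : ℕ, (∑' k, p (k + (n + 1))) = 1 - ∑ m ∈ Finset.range (n + 1), p m := by
    intro n
    have h := Summable.sum_add_tsum_nat_add (f := p) (n + 1) hpsum
    rw [hsum] at h
    linarith
  -- key inequality: (1 - H n) * (1 - μ) ≤ tail
  have key : ∀ n : ℕ, (1 - H n) * (1 - μ) ≤ ∑' k, p (k + (n + 1)) := by
    intro n
    rw [tail_eq]
    obtain ⟨hx0, hx1⟩ := hH n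
    have h1x : (0:ℝ) ≤ 1 - H n := by linarith
    have hs : ∑ m ∈ Finset.range (n + 1), p m * (1 - H n ^ m)
        ≤ ∑ m ∈ Finset.range (n + 1), (m : ℝ) * p m * (1 - H n) := by
      apply Finset.sum_le_sum
      intro m _
      have hgeom : 1 - H n ^ m = (∑ i ∈ Finset.range m, H n ^ i) * (1 - H n) := by
        have h := geom_sum_mul (H n) m
        nlinarith [h]
      have hbound : (∑ i ∈ Finset.range m, H n ^ i) ≤ (m : ℝ) := by
        calc (∑ i ∈ Finset.range m, H n ^ i) ≤ ∑ i ∈ Finset.range m, (1:ℝ) :=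
              Finset.sum_le_sum fun i _ => pow_le_one₀ hx0 hx1
          _ = (m : ℝ) := by simp
      calc p m * (1 - H n ^ m) = p m * ((∑ i ∈ Finset.range m, H n ^ i) * (1 - H n)) := by
            rw [← hgeom]
        _ ≤ p m * ((m : ℝ) * (1 - H n)) := by
            apply mul_le_mul_of_nonneg_left _ (hp m)
            exact mul_le_mul_of_nonneg_right hbound h1x
        _ = (m : ℝ) * p m * (1 - H n) := by ring
    have hpart : ∑ m ∈ Finset.range (n + 1), (m : ℝ) * p m ≤ μ :=
      Summable.sum_le_tsum _ (fun m _ => hgnn m) hmeanS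
    have hfix' := hfix n
    have expand : ∑ m ∈ Finset.range (n + 1), p m * (1 - H n ^ m)
        = (∑ m ∈ Finset.range (n + 1), p m) - ∑ m ∈ Finset.range (n + 1), p m * H n ^ m := by
      rw [← Finset.sum_sub_distrib]
      exact Finset.sum_congr rfl fun m _ => by ring
    have hsum_mul : ∑ m ∈ Finset.range (n + 1), (m : ℝ) * p m * (1 - H n)
        = (∑ m ∈ Finset.range (n + 1), (m : ℝ) * p m) * (1 - H n) := by
      rw [Finset.sum_mul]
    have hμbound : (∑ m ∈ Finset.range (n + 1), (m : ℝ) * p m) * (1 - H n) ≤ μ * (1 - H n) :=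
      mul_le_mul_of_nonneg_right hpart h1x
    nlinarith [hs, expand, hsum_mul, hμbound, hfix']
  -- tail sums
  have hptail : ∀ n : ℕ, Summable fun k => p (k + (n + 1)) := fun n =>
    (summable_nat_add_iff (n + 1)).2 hpsum
  have hgtail : ∀ n : ℕ, Summable fun k : ℕ => ((k + (n + 1) : ℕ) : ℝ) * p (k + (n + 1)) :=
    fun n => (summable_nat_add_iff (f := fun k : ℕ => (k : ℝ) * p k) (n + 1)).2 hmeanS
  set T : ℕ → ℝ := fun n => ∑' k : ℕ, ((k + (n + 1) : ℕ) : ℝ) * p (k + (n + 1)) with hTdef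
  have hnt : ∀ n : ℕ, (n : ℝ) * (∑' k, p (k + (n + 1))) ≤ T n := by
    intro n
    rw [← tsum_mul_left]
    apply Summable.tsum_le_tsum _ ((hptail n).mul_left _) (hgtail n)
    intro k
    have hc : (n : ℝ) ≤ ((k + (n + 1) : ℕ) : ℝ) := by
      push_cast
      linarith [Nat.cast_nonneg (α := ℝ) k]
    exact mul_le_mul_of_nonneg_right hc (hp _)
  have hT0 : Tendsto T atTop (𝓝 0) := by
    have hTeq : ∀ n : ℕ, T n = μ - ∑ m ∈ Finset.range (n + 1), (m : ℝ) * p m := by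
      intro n
      have h := Summable.sum_add_tsum_nat_add (f := fun k : ℕ => (k : ℝ) * p k) (n + 1) hmeanS
      linarith
    have hpartial : Tendsto (fun n : ℕ => ∑ m ∈ Finset.range (n + 1), (m : ℝ) * p m)
        atTop (𝓝 μ) :=
      (hmeanS.hasSum.tendsto_sum_nat).comp (tendsto_add_atTop_nat 1)
    have : Tendsto (fun n : ℕ => μ - ∑ m ∈ Finset.range (n + 1), (m : ℝ) * p m)
        atTop (𝓝 (μ - μ)) := tendsto_const_nhds.sub hpartial
    rw [sub_self] at this
    exact this.congr fun n => (hTeq n).symm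
  have hTnn : ∀ n : ℕ, 0 ≤ (n : ℝ) * (1 - H n) := by
    intro n
    have := (hH n).2
    have hn : (0:ℝ) ≤ (n : ℝ) := Nat.cast_nonneg n
    nlinarith
  have hfirst : Tendsto (fun n : ℕ => (n : ℝ) * (1 - H n)) atTop (𝓝 0) := by
    apply squeeze_zero hTnn (g := fun n => T n * (1 - μ)⁻¹)
    · intro n
      have h1 : (n : ℝ) * (1 - H n) * (1 - μ) ≤ T n := by
        have h2 : (n : ℝ) * ((1 - H n) * (1 - μ)) ≤ (n : ℝ) * (∑' k, p (k + (n + 1))) :=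
          mul_le_mul_of_nonneg_left (key n) (Nat.cast_nonneg n)
        calc (n : ℝ) * (1 - H n) * (1 - μ) = (n : ℝ) * ((1 - H n) * (1 - μ)) := by ring
          _ ≤ _ := h2
          _ ≤ T n := hnt n
      rw [← le_div_iff₀ hεpos] at h1
      rw [div_eq_mul_inv] at h1
      exact h1
    · have := hT0.mul_const (1 - μ)⁻¹
      rwa [zero_mul] at this
  refine ⟨hfirst, ?_⟩
  have hlow : ∀ n : ℕ, 1 - (n : ℝ) * (1 - H n) ≤ H n ^ n := by
    intro n
    have h2 : (-2:ℝ) ≤ H n - 1 := by linarith [(hH n).1]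
    have h := one_add_mul_le_pow h2 n
    have he : (1 + (H n - 1)) = H n := by ring
    rw [he] at h
    calc 1 - (n : ℝ) * (1 - H n) = 1 + (n : ℝ) * (H n - 1) := by ring
      _ ≤ H n ^ n := h
  have hup : ∀ n : ℕ, H n ^ n ≤ 1 := fun n => pow_le_one₀ (hH n).1 (hH n).2
  have hlowlim : Tendsto (fun n : ℕ => 1 - (n : ℝ) * (1 - H n)) atTop (𝓝 1) := by
    have := tendsto_const_nhds (x := (1:ℝ)) (f := atTop (α := ℕ)) |>.sub hfirst
    rwa [sub_zero] at this
  exact tendsto_of_tendsto_of_tendsto_of_le_of_le hlowlim tendsto_const_nhds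
    (fun n => hlow n) (fun n => hup n)
end

section
/- Let p be a pmf on ℕ with finite mean μ_p, and let H : ℕ → [0,1] be non-decreasing with H(n) → 1 as n → ∞. Then lim_{n→∞} (1 − Σ_{1≤m≤n−1} p_m Σ_{1≤i≤m} H(n)^{m−i} H(n−1)^{i−1}) = 1 − μ_p. -/
open Filter Topology Finset

/-- If `p` is a pmf with finite mean `μ_p` and `H : ℕ → [0,1]` is
non-decreasing with `H n → 1`, then
`1 − Σ_{1≤m≤n−1} p m Σ_{1≤i≤m} H(n)^{m−i} H(n−1)^{i−1} → 1 − μ_p`. -/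
theorem limit_one_sub_sum (p : ℕ → ℝ) (hp : ∀ k, 0 ≤ p k) (hsum : ∑' k, p k = 1)
    (hmeanS : Summable fun k : ℕ => (k : ℝ) * p k)
    (H : ℕ → ℝ) (hH : ∀ n, H n ∈ Set.Icc (0 : ℝ) 1) (hmono : Monotone H)
    (hlim : Tendsto H atTop (𝓝 1)) :
    Tendsto
      (fun n : ℕ =>
        1 - ∑ m ∈ Finset.Icc 1 (n - 1), p m *
          ∑ i ∈ Finset.Icc 1 m, H n ^ (m - i) * H (n - 1) ^ (i - 1))
      atTop (𝓝 (1 - ∑' k : ℕ, (k : ℝ) * p k)) := by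
  set F : ℕ → ℕ → ℝ := fun n m =>
    if m ∈ Finset.Icc 1 (n - 1) then
      p m * ∑ i ∈ Finset.Icc 1 m, H n ^ (m - i) * H (n - 1) ^ (i - 1)
    else 0 with hF
  have hHn1 : Tendsto (fun n : ℕ => H (n - 1)) atTop (𝓝 1) :=
    hlim.comp (tendsto_sub_atTop_nat 1)
  have hterm_mem : ∀ n m i, m - i ≤ m → H n ^ (m - i) * H (n - 1) ^ (i - 1) ∈ Set.Icc (0:ℝ) 1 := by
    intro n m i _
    constructor
    · exact mul_nonneg (pow_nonneg (hH n).1 _) (pow_nonneg (hH (n-1)).1 _)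
    · exact mul_le_one₀ (pow_le_one₀ (hH n).1 (hH n).2)
        (pow_nonneg (hH (n-1)).1 _) (pow_le_one₀ (hH (n-1)).1 (hH (n-1)).2)
  -- dominated convergence
  have key : Tendsto (fun n => ∑' m, F n m) atTop (𝓝 (∑' k : ℕ, (k : ℝ) * p k)) := by
    have hbound : Summable (fun k : ℕ => (k : ℝ) * p k) := hmeanS
    refine tendsto_tsum_of_dominated_convergence hbound ?_ ?_
    · intro m
      rcases Nat.eq_zero_or_pos m with rfl | hm
      · have : ∀ n, F n 0 = 0 := by
          intro n; simp [hF]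
        simpa [this] using tendsto_const_nhds
      · have hev : (fun n => F n m) =ᶠ[atTop]
            (fun n => p m * ∑ i ∈ Finset.Icc 1 m, H n ^ (m - i) * H (n - 1) ^ (i - 1)) := by
          filter_upwards [eventually_ge_atTop (m + 1)] with n hn
          have : m ∈ Finset.Icc 1 (n - 1) := by
            simp only [Finset.mem_Icc]; omega
          simp only [hF, if_pos this]
        have hinner : Tendsto
            (fun n => ∑ i ∈ Finset.Icc 1 m, H n ^ (m - i) * H (n - 1) ^ (i - 1))
            atTop (𝓝 (m : ℝ)) := by
          have : Tendsto
              (fun n => ∑ i ∈ Finset.Icc 1 m, H n ^ (m - i) * H (n - 1) ^ (i - 1))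
              atTop (𝓝 (∑ _i ∈ Finset.Icc 1 m, (1:ℝ))) := by
            refine tendsto_finset_sum _ (fun i _ => ?_)
            have h1 : Tendsto (fun n => H n ^ (m - i)) atTop (𝓝 1) := by
              simpa using hlim.pow (m - i)
            have h2 : Tendsto (fun n => H (n - 1) ^ (i - 1)) atTop (𝓝 1) := by
              simpa using hHn1.pow (i - 1)
            simpa using h1.mul h2
          simpa [Nat.card_Icc] using this
        have := (tendsto_const_nhds (x := p m)).mul hinner
        rw [show p m * (m : ℝ) = (m : ℝ) * p m by ring] at this
        exact Tendsto.congr' hev.symm this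
    · refine Eventually.of_forall (fun n => fun m => ?_)
      rcases em (m ∈ Finset.Icc 1 (n - 1)) with hmem | hmem
      · simp only [hF, if_pos hmem]
        have hsum_le : ∑ i ∈ Finset.Icc 1 m, H n ^ (m - i) * H (n - 1) ^ (i - 1) ≤ (m : ℝ) := by
          calc ∑ i ∈ Finset.Icc 1 m, H n ^ (m - i) * H (n - 1) ^ (i - 1)
              ≤ ∑ _i ∈ Finset.Icc 1 m, (1:ℝ) :=
                Finset.sum_le_sum (fun i _ => (hterm_mem n m i (Nat.sub_le m i)).2)
            _ = (m : ℝ) := by simp [Nat.card_Icc]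
        have hsum_nonneg : 0 ≤ ∑ i ∈ Finset.Icc 1 m, H n ^ (m - i) * H (n - 1) ^ (i - 1) :=
          Finset.sum_nonneg (fun i _ => (hterm_mem n m i (Nat.sub_le m i)).1)
        rw [Real.norm_eq_abs, abs_of_nonneg (mul_nonneg (hp m) hsum_nonneg)]
        calc p m * ∑ i ∈ Finset.Icc 1 m, H n ^ (m - i) * H (n - 1) ^ (i - 1)
            ≤ p m * (m : ℝ) := mul_le_mul_of_nonneg_left hsum_le (hp m)
          _ = (m : ℝ) * p m := by ring
      · simp only [hF, if_neg hmem, norm_zero]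
        exact mul_nonneg (Nat.cast_nonneg m) (hp m)
  have heq : ∀ n, ∑' m, F n m =
      ∑ m ∈ Finset.Icc 1 (n - 1), p m *
        ∑ i ∈ Finset.Icc 1 m, H n ^ (m - i) * H (n - 1) ^ (i - 1) := by
    intro n
    rw [tsum_eq_sum (s := Finset.Icc 1 (n - 1)) (fun m hm => by simp only [hF, if_neg hm])]
    exact Finset.sum_congr rfl (fun m hm => by simp only [hF, if_pos hm])
  have key' : Tendsto
      (fun n => ∑ m ∈ Finset.Icc 1 (n - 1), p m *
        ∑ i ∈ Finset.Icc 1 m, H n ^ (m - i) * H (n - 1) ^ (i - 1))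
      atTop (𝓝 (∑' k : ℕ, (k : ℝ) * p k)) := by
    simpa [heq] using key
  exact (tendsto_const_nhds (x := (1:ℝ))).sub key'
end

section
/- (Tail equivalence for sub-critical Galton-Watson trees.) Let p be a sub-critical (μ_p < 1) unbounded pmf on ℕ, and let H : ℕ → [0,1] be the non-decreasing solution of H(n) = Σ_{m≤n} p_m H(n)^m with H(n) → 1. Set q_n = H(n) − H(n−1), F̄(n) = Σ_{k>n} p_k, H̄(n) = 1 − H(n). Then p_n/q_n → 1 − μ_p along the subsequence {n : p_n > 0}, and F̄(n)/H̄(n) → 1 − μ_p as n → ∞. -/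
open Filter Topology Finset

/-- Tail equivalence for sub-critical Galton-Watson trees: with
`q n = H n − H (n−1)`, `F̄(n) = Σ_{k>n} p k` and `H̄(n) = 1 − H n`, one has
`p n / q n → 1 − μ_p` along `{n : p n > 0}` and `F̄(n)/H̄(n) → 1 − μ_p`. -/
theorem tail_equivalence (p : ℕ → ℝ) (hp : ∀ k, 0 ≤ p k) (hsum : ∑' k, p k = 1)
    (hmeanS : Summable fun k : ℕ => (k : ℝ) * p k)
    (hmean : ∑' k : ℕ, (k : ℝ) * p k < 1)
    (hunb : {n : ℕ | 0 < p n}.Infinite)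
    (H : ℕ → ℝ) (hH : ∀ n, H n ∈ Set.Icc (0 : ℝ) 1) (hmono : Monotone H)
    (hfix : ∀ n, H n = ∑ m ∈ Finset.range (n + 1), p m * H n ^ m)
    (hlim : Tendsto H atTop (𝓝 1)) :
    Tendsto (fun n : ℕ => p n / (H n - H (n - 1)))
        (atTop ⊓ Filter.principal {n : ℕ | 0 < p n})
        (𝓝 (1 - ∑' k : ℕ, (k : ℝ) * p k)) ∧
      Tendsto (fun n : ℕ => (∑' k : ℕ, if n < k then p k else 0) / (1 - H n))
        atTop (𝓝 (1 - ∑' k : ℕ, (k : ℝ) * p k)) := by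
  classical
  have hPsum : Summable p := by
    by_contra h
    rw [tsum_eq_zero_of_not_summable h] at hsum
    norm_num at hsum
  set μ := ∑' k : ℕ, (k : ℝ) * p k with hμdef
  have hμ0 : 0 ≤ μ := tsum_nonneg fun k => mul_nonneg (Nat.cast_nonneg k) (hp k)
  have hμ1 : μ < 1 := hmean
  have hH0 : ∀ n, (0 : ℝ) ≤ H n := fun n => (hH n).1
  have hH1 : ∀ n, H n ≤ 1 := fun n => (hH n).2
  -- summability of tail indicators
  have hsInd : ∀ (g : ℕ → ℝ), Summable g → ∀ n : ℕ,
      Summable (fun k => if n < k then g k else 0) := by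
    intro g hg n
    refine (hg.indicator {k : ℕ | n < k}).congr fun k => ?_
    simp [Set.indicator_apply]
  have hsInd' : ∀ (g : ℕ → ℝ), Summable g → ∀ n : ℕ,
      Summable (fun k => if k ≤ n then g k else 0) := by
    intro g hg n
    refine (hg.indicator {k : ℕ | k ≤ n}).congr fun k => ?_
    simp [Set.indicator_apply]
  -- the tail sum identity
  have htail : ∀ (g : ℕ → ℝ), Summable g → ∀ n : ℕ,
      (∑' k, if n < k then g k else 0)
        = (∑' k, g k) - ∑ k ∈ Finset.range (n + 1), g k := by
    intro g hg n
    have h2 : (∑' k, if k ≤ n then g k else 0) = ∑ k ∈ Finset.range (n + 1), g k := by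
      rw [tsum_eq_sum (s := Finset.range (n + 1))
        (fun k hk => if_neg fun h => hk (Finset.mem_range.mpr (Nat.lt_succ_of_le h)))]
      exact Finset.sum_congr rfl fun k hk =>
        if_pos (Nat.lt_succ_iff.mp (Finset.mem_range.mp hk))
    have h3 : (∑' k, ((if k ≤ n then g k else 0) + (if n < k then g k else 0)))
        = ∑' k, g k := by
      apply tsum_congr
      intro k
      by_cases h : k ≤ n
      · simp [h, Nat.not_lt.mpr h]
      · simp [h, Nat.lt_of_not_le h]
    rw [Summable.tsum_add (hsInd' g hg n) (hsInd g hg n), h2] at h3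
    linarith
  have htail0 : ∀ (g : ℕ → ℝ), Summable g →
      Tendsto (fun n : ℕ => (∑' k, g k) - ∑ k ∈ Finset.range (n + 1), g k) atTop (𝓝 0) := by
    intro g hg
    have h1 : Tendsto (fun n : ℕ => ∑ k ∈ Finset.range (n + 1), g k) atTop (𝓝 (∑' k, g k)) :=
      hg.hasSum.tendsto_sum_nat.comp (tendsto_add_atTop_nat 1)
    have h2 := (tendsto_const_nhds (x := ∑' k, g k)).sub h1
    simpa using h2
  -- positivity of p 0 and of H
  have hp0 : 0 < p 0 := by
    have e1 : ∑' k, p k = p 0 + ∑' k, p (k + 1) := Summable.tsum_eq_zero_add hPsum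
    have e2 := Summable.tsum_eq_zero_add hmeanS
    simp only [Nat.cast_zero, zero_mul, zero_add] at e2
    have hp1s : Summable fun k => p (k + 1) :=
      (summable_nat_add_iff 1).mpr hPsum
    have hm1s : Summable fun k : ℕ => ((k + 1 : ℕ) : ℝ) * p (k + 1) :=
      (summable_nat_add_iff (f := fun k : ℕ => (k : ℝ) * p k) 1).mpr hmeanS
    have e3 : ∑' k, p (k + 1) ≤ ∑' k : ℕ, ((k + 1 : ℕ) : ℝ) * p (k + 1) := by
      refine Summable.tsum_le_tsum (fun k => ?_) hp1s hm1s
      have h1 : (1 : ℝ) ≤ ((k + 1 : ℕ) : ℝ) := by exact_mod_cast Nat.succ_le_succ (Nat.zero_le k)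
      nlinarith [hp (k + 1)]
    rw [hsum] at e1
    rw [← hμdef] at e2
    linarith
  have hH00 : H 0 = p 0 := by simpa using hfix 0
  have hHpos : ∀ n, 0 < H n := fun n =>
    lt_of_lt_of_le (hH00 ▸ hp0) (hmono (Nat.zero_le n))
  -- positivity of the tails of p
  have hFpos : ∀ n : ℕ, 0 < ∑' k, if n < k then p k else 0 := by
    intro n
    obtain ⟨k, hk, hnk⟩ := hunb.exists_gt n
    have hle : (if n < k then p k else 0) ≤ ∑' k, if n < k then p k else 0 := by
      refine Summable.le_tsum (hsInd p hPsum n) k fun j _ => ?_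
      by_cases h : n < j <;> simp [h, hp j]
    rw [if_pos hnk] at hle
    exact lt_of_lt_of_le hk hle
  have hpow1 : ∀ n j : ℕ, H n ^ j ≤ 1 := fun n j => pow_le_one₀ (hH0 n) (hH1 n)
  have hpow0 : ∀ n j : ℕ, (0 : ℝ) ≤ H n ^ j := fun n j => pow_nonneg (hH0 n) j
  -- the two auxiliary sums
  set S : ℕ → ℝ := fun n =>
    ∑ m ∈ Finset.range n, p m * ∑ j ∈ Finset.range m, H n ^ j * H (n - 1) ^ (m - 1 - j)
    with hSdef
  set T : ℕ → ℝ := fun n =>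
    ∑ m ∈ Finset.range (n + 1), p m * ∑ j ∈ Finset.range m, H n ^ j with hTdef
  have hinner1 : ∀ n m : ℕ,
      (∑ j ∈ Finset.range m, H n ^ j * H (n - 1) ^ (m - 1 - j)) ≤ (m : ℝ) := by
    intro n m
    calc (∑ j ∈ Finset.range m, H n ^ j * H (n - 1) ^ (m - 1 - j))
        ≤ ∑ _j ∈ Finset.range m, (1 : ℝ) := by
          refine Finset.sum_le_sum fun j _ => ?_
          nlinarith [hpow1 n j, hpow0 n j, hpow1 (n - 1) (m - 1 - j), hpow0 (n - 1) (m - 1 - j)]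
      _ = (m : ℝ) := by simp
  have hinner1nn : ∀ n m : ℕ,
      (0 : ℝ) ≤ ∑ j ∈ Finset.range m, H n ^ j * H (n - 1) ^ (m - 1 - j) := fun n m =>
    Finset.sum_nonneg fun j _ => mul_nonneg (hpow0 n j) (hpow0 (n - 1) _)
  have hinner2 : ∀ n m : ℕ, (∑ j ∈ Finset.range m, H n ^ j) ≤ (m : ℝ) := by
    intro n m
    calc (∑ j ∈ Finset.range m, H n ^ j) ≤ ∑ _j ∈ Finset.range m, (1 : ℝ) :=
          Finset.sum_le_sum fun j _ => hpow1 n j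
      _ = (m : ℝ) := by simp
  have hinner2nn : ∀ n m : ℕ, (0 : ℝ) ≤ ∑ j ∈ Finset.range m, H n ^ j := fun n m =>
    Finset.sum_nonneg fun j _ => hpow0 n j
  have hSle : ∀ n, S n ≤ μ := by
    intro n
    calc S n ≤ ∑ m ∈ Finset.range n, (m : ℝ) * p m := by
          refine Finset.sum_le_sum fun m _ => ?_
          calc p m * ∑ j ∈ Finset.range m, H n ^ j * H (n - 1) ^ (m - 1 - j)
              ≤ p m * (m : ℝ) := mul_le_mul_of_nonneg_left (hinner1 n m) (hp m)
            _ = (m : ℝ) * p m := mul_comm _ _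
      _ ≤ μ := Summable.sum_le_tsum _ (fun m _ => mul_nonneg (Nat.cast_nonneg m) (hp m)) hmeanS
  have hTle : ∀ n, T n ≤ μ := by
    intro n
    calc T n ≤ ∑ m ∈ Finset.range (n + 1), (m : ℝ) * p m := by
          refine Finset.sum_le_sum fun m _ => ?_
          calc p m * ∑ j ∈ Finset.range m, H n ^ j
              ≤ p m * (m : ℝ) := mul_le_mul_of_nonneg_left (hinner2 n m) (hp m)
            _ = (m : ℝ) * p m := mul_comm _ _
      _ ≤ μ := Summable.sum_le_tsum _ (fun m _ => mul_nonneg (Nat.cast_nonneg m) (hp m)) hmeanS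
  -- Identity A
  have hidA : ∀ n : ℕ, 1 ≤ n →
      (H n - H (n - 1)) * (1 - S n) = p n * H n ^ n := by
    intro n hn
    have hpred : (n - 1) + 1 = n := Nat.succ_pred_eq_of_pos hn
    have e1 : H n = p n * H n ^ n + ∑ m ∈ Finset.range n, p m * H n ^ m := by
      nth_rewrite 1 [hfix n]
      rw [Finset.sum_range_succ]; ring
    have e2 : H (n - 1) = ∑ m ∈ Finset.range n, p m * H (n - 1) ^ m := by
      have := hfix (n - 1)
      rwa [hpred] at this
    have e4 : H n - H (n - 1) = p n * H n ^ n + S n * (H n - H (n - 1)) := by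
      calc H n - H (n - 1)
          = p n * H n ^ n
            + ∑ m ∈ Finset.range n, (p m * H n ^ m - p m * H (n - 1) ^ m) := by
            rw [Finset.sum_sub_distrib]
            linear_combination e1 - e2
        _ = p n * H n ^ n + ∑ m ∈ Finset.range n,
              p m * ((∑ j ∈ Finset.range m, H n ^ j * H (n - 1) ^ (m - 1 - j))
                * (H n - H (n - 1))) := by
            congr 1
            refine Finset.sum_congr rfl fun m _ => ?_
            rw [geom_sum₂_mul (H n) (H (n - 1)) m]; ring
        _ = p n * H n ^ n + S n * (H n - H (n - 1)) := by
            simp only [hSdef]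
            rw [Finset.sum_mul]
            congr 1
            exact Finset.sum_congr rfl fun m _ => by ring
    linear_combination e4
  -- Identity B
  have hidB : ∀ n : ℕ,
      (1 - H n) * (1 - T n) = ∑' k, if n < k then p k else 0 := by
    intro n
    rw [htail p hPsum n, hsum]
    have e2 : (1 - H n) * T n = ∑ m ∈ Finset.range (n + 1), p m * (1 - H n ^ m) := by
      simp only [hTdef]
      rw [Finset.mul_sum]
      refine Finset.sum_congr rfl fun m _ => ?_
      have hg := geom_sum_mul (H n) m
      have e1 : 1 - H n ^ m = (∑ j ∈ Finset.range m, H n ^ j) * (1 - H n) := by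
        linear_combination hg
      rw [e1]; ring
    have e3 : (∑ m ∈ Finset.range (n + 1), p m * (1 - H n ^ m))
        = (∑ m ∈ Finset.range (n + 1), p m) - H n := by
      have h4 : (∑ m ∈ Finset.range (n + 1), p m * (1 - H n ^ m))
          = (∑ m ∈ Finset.range (n + 1), p m)
            - ∑ m ∈ Finset.range (n + 1), p m * H n ^ m := by
        rw [← Finset.sum_sub_distrib]
        exact Finset.sum_congr rfl fun m _ => by ring
      rw [h4, ← hfix n]
    linear_combination -e2 - e3
  -- H n < 1
  have hHlt1 : ∀ n, H n < 1 := by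
    intro n
    have h1T : 0 < 1 - T n := by linarith [hTle n]
    have h2 : 0 < (1 - H n) * (1 - T n) := (hidB n) ▸ hFpos n
    by_contra h
    push_neg at h
    nlinarith
  -- limits of S and T via dominated convergence
  have hHn1 : Tendsto (fun n : ℕ => H (n - 1)) atTop (𝓝 1) :=
    hlim.comp (tendsto_sub_atTop_nat 1)
  have hSlim : Tendsto S atTop (𝓝 μ) := by
    have key : Tendsto (fun n : ℕ => ∑' m : ℕ,
        (if m < n then p m * ∑ j ∈ Finset.range m, H n ^ j * H (n - 1) ^ (m - 1 - j) else 0))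
        atTop (𝓝 (∑' m : ℕ, (m : ℝ) * p m)) := by
      refine tendsto_tsum_of_dominated_convergence hmeanS (fun m => ?_) ?_
      · have hin : Tendsto (fun n : ℕ =>
            p m * ∑ j ∈ Finset.range m, H n ^ j * H (n - 1) ^ (m - 1 - j))
            atTop (𝓝 ((m : ℝ) * p m)) := by
          have h0 : Tendsto (fun n : ℕ =>
              ∑ j ∈ Finset.range m, H n ^ j * H (n - 1) ^ (m - 1 - j))
              atTop (𝓝 (∑ _j ∈ Finset.range m, (1 : ℝ))) := by
            refine tendsto_finset_sum _ fun j _ => ?_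
            have h1 : Tendsto (fun n : ℕ => H n ^ j) atTop (𝓝 1) := by
              simpa using hlim.pow j
            have h2 : Tendsto (fun n : ℕ => H (n - 1) ^ (m - 1 - j)) atTop (𝓝 1) := by
              simpa using hHn1.pow (m - 1 - j)
            simpa using h1.mul h2
          have h3 := (tendsto_const_nhds (x := p m)).mul h0
          simp only [Finset.sum_const, Finset.card_range, nsmul_eq_mul, mul_one] at h3
          have : p m * (m : ℝ) = (m : ℝ) * p m := mul_comm _ _
          rw [this] at h3
          exact h3
        refine hin.congr' ?_
        filter_upwards [eventually_gt_atTop m] with n hn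
        rw [if_pos hn]
      · refine Eventually.of_forall fun n m => ?_
        by_cases h : m < n
        · rw [if_pos h, Real.norm_eq_abs,
            abs_of_nonneg (mul_nonneg (hp m) (hinner1nn n m))]
          calc p m * ∑ j ∈ Finset.range m, H n ^ j * H (n - 1) ^ (m - 1 - j)
              ≤ p m * (m : ℝ) := mul_le_mul_of_nonneg_left (hinner1 n m) (hp m)
            _ = (m : ℝ) * p m := mul_comm _ _
        · rw [if_neg h]
          simpa using mul_nonneg (Nat.cast_nonneg m) (hp m)
    have heq : ∀ n : ℕ, (∑' m : ℕ,
        (if m < n then p m * ∑ j ∈ Finset.range m, H n ^ j * H (n - 1) ^ (m - 1 - j) else 0))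
        = S n := by
      intro n
      rw [tsum_eq_sum (s := Finset.range n)
        (fun m hm => if_neg fun h => hm (Finset.mem_range.mpr h))]
      simp only [hSdef]
      exact Finset.sum_congr rfl fun m hm => if_pos (Finset.mem_range.mp hm)
    exact key.congr heq
  have hTlim : Tendsto T atTop (𝓝 μ) := by
    have key : Tendsto (fun n : ℕ => ∑' m : ℕ,
        (if m < n + 1 then p m * ∑ j ∈ Finset.range m, H n ^ j else 0))
        atTop (𝓝 (∑' m : ℕ, (m : ℝ) * p m)) := by
      refine tendsto_tsum_of_dominated_convergence hmeanS (fun m => ?_) ?_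
      · have hin : Tendsto (fun n : ℕ => p m * ∑ j ∈ Finset.range m, H n ^ j)
            atTop (𝓝 ((m : ℝ) * p m)) := by
          have h0 : Tendsto (fun n : ℕ => ∑ j ∈ Finset.range m, H n ^ j)
              atTop (𝓝 (∑ _j ∈ Finset.range m, (1 : ℝ))) := by
            refine tendsto_finset_sum _ fun j _ => ?_
            simpa using hlim.pow j
          have h3 := (tendsto_const_nhds (x := p m)).mul h0
          simp only [Finset.sum_const, Finset.card_range, nsmul_eq_mul, mul_one] at h3
          have : p m * (m : ℝ) = (m : ℝ) * p m := mul_comm _ _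
          rw [this] at h3
          exact h3
        refine hin.congr' ?_
        filter_upwards [eventually_gt_atTop m] with n hn
        rw [if_pos (Nat.lt_succ_of_lt hn)]
      · refine Eventually.of_forall fun n m => ?_
        by_cases h : m < n + 1
        · rw [if_pos h, Real.norm_eq_abs,
            abs_of_nonneg (mul_nonneg (hp m) (hinner2nn n m))]
          calc p m * ∑ j ∈ Finset.range m, H n ^ j
              ≤ p m * (m : ℝ) := mul_le_mul_of_nonneg_left (hinner2 n m) (hp m)
            _ = (m : ℝ) * p m := mul_comm _ _
        · rw [if_neg h]
          simpa using mul_nonneg (Nat.cast_nonneg m) (hp m)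
    have heq : ∀ n : ℕ, (∑' m : ℕ,
        (if m < n + 1 then p m * ∑ j ∈ Finset.range m, H n ^ j else 0)) = T n := by
      intro n
      rw [tsum_eq_sum (s := Finset.range (n + 1))
        (fun m hm => if_neg fun h => hm (Finset.mem_range.mpr h))]
      simp only [hTdef]
      exact Finset.sum_congr rfl fun m hm => if_pos (Finset.mem_range.mp hm)
    exact key.congr heq
  -- n * F̄(n) → 0
  have hnF : Tendsto (fun n : ℕ => (n : ℝ) * ∑' k, if n < k then p k else 0)
      atTop (𝓝 0) := by
    refine squeeze_zero (fun n => mul_nonneg (Nat.cast_nonneg n) (hFpos n).le)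
      (fun n => ?_) (htail0 _ hmeanS)
    calc (n : ℝ) * ∑' k, (if n < k then p k else 0)
        = ∑' k, (n : ℝ) * (if n < k then p k else 0) := (tsum_mul_left).symm
      _ ≤ ∑' k, (if n < k then (k : ℝ) * p k else 0) := by
          refine Summable.tsum_le_tsum (fun k => ?_) ((hsInd p hPsum n).mul_left _)
            (hsInd _ hmeanS n)
          by_cases h : n < k
          · rw [if_pos h, if_pos h]
            exact mul_le_mul_of_nonneg_right (by exact_mod_cast h.le) (hp k)
          · simp [h]
      _ = (∑' k : ℕ, (k : ℝ) * p k) - ∑ k ∈ Finset.range (n + 1), (k : ℝ) * p k :=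
          htail _ hmeanS n
  -- n * (1 - H n) → 0
  have hnH : Tendsto (fun n : ℕ => (n : ℝ) * (1 - H n)) atTop (𝓝 0) := by
    have hb : ∀ n : ℕ, (n : ℝ) * (1 - H n)
        ≤ ((n : ℝ) * ∑' k, if n < k then p k else 0) * (1 / (1 - μ)) := by
      intro n
      have h2 : (1 - H n) * (1 - μ) ≤ (1 - H n) * (1 - T n) :=
        mul_le_mul_of_nonneg_left (by linarith [hTle n]) (by linarith [hH1 n])
      rw [hidB n] at h2
      have hμpos : (0 : ℝ) < 1 - μ := by linarith
      have h3 : 1 - H n ≤ (∑' k, if n < k then p k else 0) * (1 / (1 - μ)) := by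
        rw [mul_one_div, le_div_iff₀ hμpos]
        exact h2
      calc (n : ℝ) * (1 - H n)
          ≤ (n : ℝ) * ((∑' k, if n < k then p k else 0) * (1 / (1 - μ))) :=
            mul_le_mul_of_nonneg_left h3 (Nat.cast_nonneg n)
        _ = ((n : ℝ) * ∑' k, if n < k then p k else 0) * (1 / (1 - μ)) := by ring
    refine squeeze_zero (fun n => mul_nonneg (Nat.cast_nonneg n) (by linarith [hH1 n]))
      hb ?_
    simpa using hnF.mul_const (1 / (1 - μ))
  -- H n ^ n → 1
  have hpowlim : Tendsto (fun n : ℕ => H n ^ n) atTop (𝓝 1) := by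
    have h1 : Tendsto (fun n : ℕ => 1 - H n ^ n) atTop (𝓝 0) := by
      refine squeeze_zero (fun n => by linarith [hpow1 n n]) (fun n => ?_) hnH
      have hg := geom_sum_mul (H n) n
      have e : 1 - H n ^ n = (∑ j ∈ Finset.range n, H n ^ j) * (1 - H n) := by
        linear_combination hg
      rw [e]
      exact mul_le_mul_of_nonneg_right (hinner2 n n) (by linarith [hH1 n])
    have h2 := (tendsto_const_nhds (x := (1:ℝ))).sub h1
    simpa using h2
  constructor
  · -- first limit
    have hratio : Tendsto (fun n : ℕ => (1 - S n) / H n ^ n) atTop (𝓝 (1 - μ)) := by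
      have h := ((tendsto_const_nhds (x := (1:ℝ))).sub hSlim).div hpowlim (by norm_num)
      rw [div_one] at h; exact h
    have hev : ∀ᶠ n in atTop ⊓ Filter.principal {n : ℕ | 0 < p n},
        (1 - S n) / H n ^ n = p n / (H n - H (n - 1)) := by
      rw [eventually_inf_principal]
      filter_upwards [eventually_ge_atTop 1] with n hn hpn
      have hpn' : 0 < p n := hpn
      have hA := hidA n hn
      have h1 : 0 < p n * H n ^ n := mul_pos hpn' (pow_pos (hHpos n) n)
      have h2 : 0 < 1 - S n := by linarith [hSle n]
      have hq : 0 < H n - H (n - 1) := by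
        rcases lt_or_ge (H (n - 1)) (H n) with h | h
        · linarith
        · exfalso
          have hq0 : H n - H (n - 1) ≤ 0 := by linarith
          nlinarith
      rw [div_eq_div_iff (pow_ne_zero n (hHpos n).ne') hq.ne']
      linear_combination hA
    exact (hratio.mono_left inf_le_left).congr' hev
  · -- second limit
    have heq : ∀ n : ℕ, (∑' k, if n < k then p k else 0) / (1 - H n) = 1 - T n := by
      intro n
      have hne : (1 : ℝ) - H n ≠ 0 := (sub_pos.mpr (hHlt1 n)).ne'
      rw [← hidB n, mul_comm, mul_div_assoc, div_self hne, mul_one]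
    have h := (tendsto_const_nhds (x := (1:ℝ))).sub hTlim
    exact h.congr fun n => (heq n).symm
end

section
/- Let p be a sub-critical unbounded pmf on ℕ with associated maximal-out-degree cdf H (satisfying H(n) = Σ_{m≤n} p_m H(n)^m, non-decreasing, H(n) → 1), and q_n = H(n) − H(n−1). Then for every fixed ℓ ∈ ℕ, lim_{n→∞} H(n)^{n−ℓ} = 1 and, along {n : p_n > 0}, lim_{n→∞} p_n·H(n)^{n−ℓ}/q_n = 1 − μ_p. -/
open Filter Topology Finset

/-- Key limit for the condensation-tree convergence (equation (1) of the paper):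
for a sub-critical unbounded pmf `p` with maximal-out-degree cdf `H` and
`q n = H n − H (n−1)`, for every fixed `ℓ`, `H(n)^{n−ℓ} → 1` and
`p n · H(n)^{n−ℓ} / q n → 1 − μ_p` along `{n : p n > 0}`. -/
theorem forest_limit (p : ℕ → ℝ) (hp : ∀ k, 0 ≤ p k) (hsum : ∑' k, p k = 1)
    (hmeanS : Summable fun k : ℕ => (k : ℝ) * p k)
    (hmean : ∑' k : ℕ, (k : ℝ) * p k < 1)
    (hunb : {n : ℕ | 0 < p n}.Infinite)
    (H : ℕ → ℝ) (hH : ∀ n, H n ∈ Set.Icc (0 : ℝ) 1) (hmono : Monotone H)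
    (hfix : ∀ n, H n = ∑ m ∈ Finset.range (n + 1), p m * H n ^ m)
    (hlim : Tendsto H atTop (𝓝 1)) (ℓ : ℕ) :
    Tendsto (fun n : ℕ => H n ^ (n - ℓ)) atTop (𝓝 1) ∧
      Tendsto (fun n : ℕ => p n * H n ^ (n - ℓ) / (H n - H (n - 1)))
        (atTop ⊓ Filter.principal {n : ℕ | 0 < p n})
        (𝓝 (1 - ∑' k : ℕ, (k : ℝ) * p k)) := by
  set μ := ∑' k : ℕ, (k : ℝ) * p k with hμdef
  have hμ0 : 0 ≤ μ := tsum_nonneg fun k => mul_nonneg (Nat.cast_nonneg k) (hp k)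
  have h1μ : 0 < 1 - μ := by linarith
  have hpsum : Summable p := by
    by_contra h
    rw [tsum_eq_zero_of_not_summable h] at hsum; norm_num at hsum
  -- Bernoulli-type lower bound on powers
  have hbern : ∀ n m : ℕ, 1 - (m : ℝ) * (1 - H n) ≤ H n ^ m := by
    intro n m
    have h2 : (-2 : ℝ) ≤ H n - 1 := by have := (hH n).1; linarith
    have := one_add_mul_le_pow h2 m
    calc 1 - (m : ℝ) * (1 - H n) = 1 + (m : ℝ) * (H n - 1) := by ring
    _ ≤ (1 + (H n - 1)) ^ m := this
    _ = H n ^ m := by rw [show (1 : ℝ) + (H n - 1) = H n by ring]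
  -- key tail estimate
  have hmean_shift : ∀ n : ℕ, Summable fun k : ℕ => ((k + n : ℕ) : ℝ) * p (k + n) := by
    intro n
    exact (summable_nat_add_iff n).2 hmeanS
  have hp_shift : ∀ n : ℕ, Summable fun k : ℕ => p (k + n) := fun n =>
    (summable_nat_add_iff n).2 hpsum
  have htail : ∀ n : ℕ, (1 - H n) * (1 - μ) ≤ ∑' k, p (k + (n + 1)) := by
    intro n
    have hHn0 := (hH n).1
    have hHn1 := (hH n).2
    have hsum_split := Summable.sum_add_tsum_nat_add (f := p) (n + 1) hpsum
    rw [hsum] at hsum_split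
    have hmb : ∑ m ∈ Finset.range (n + 1), (m : ℝ) * p m ≤ μ :=
      Summable.sum_le_tsum (Finset.range (n + 1))
        (fun i _ => mul_nonneg (Nat.cast_nonneg i) (hp i)) hmeanS
    have hlow : ∑ m ∈ Finset.range (n + 1), p m * (1 - (m : ℝ) * (1 - H n)) ≤ H n := by
      conv_rhs => rw [hfix n]
      exact Finset.sum_le_sum fun m _ =>
        mul_le_mul_of_nonneg_left (hbern n m) (hp m)
    have hexp : ∑ m ∈ Finset.range (n + 1), p m * (1 - (m : ℝ) * (1 - H n)) =
        (∑ m ∈ Finset.range (n + 1), p m)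
          - (1 - H n) * ∑ m ∈ Finset.range (n + 1), (m : ℝ) * p m := by
      rw [Finset.mul_sum, ← Finset.sum_sub_distrib]
      exact Finset.sum_congr rfl fun m _ => by ring
    rw [hexp] at hlow
    nlinarith [hmb, hlow, hsum_split]
  -- (n : ℝ) * (1 - H n) → 0
  have key1 : Tendsto (fun n : ℕ => (n : ℝ) * (1 - H n)) atTop (𝓝 0) := by
    have hub : ∀ n : ℕ, (n : ℝ) * (1 - H n) ≤
        (∑' k, ((k + (n + 1) : ℕ) : ℝ) * p (k + (n + 1))) / (1 - μ) := by
      intro n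
      have h1 : (n : ℝ) * (1 - H n) * (1 - μ) ≤ (n : ℝ) * ∑' k, p (k + (n + 1)) := by
        have := mul_le_mul_of_nonneg_left (htail n) (Nat.cast_nonneg n : (0:ℝ) ≤ n)
        linarith [this]
      have h2 : (n : ℝ) * ∑' k, p (k + (n + 1)) ≤
          ∑' k, ((k + (n + 1) : ℕ) : ℝ) * p (k + (n + 1)) := by
        rw [← tsum_mul_left]
        refine Summable.tsum_le_tsum (fun k => ?_) ((hp_shift (n + 1)).mul_left _)
          (hmean_shift (n + 1))
        have : (n : ℝ) ≤ ((k + (n + 1) : ℕ) : ℝ) := by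
          exact_mod_cast Nat.le_add_left n (k + 1) |>.trans_eq (by omega)
        exact mul_le_mul_of_nonneg_right this (hp _)
      rw [le_div_iff₀ h1μ]
      linarith
    have hT : Tendsto (fun n : ℕ =>
        (∑' k, ((k + (n + 1) : ℕ) : ℝ) * p (k + (n + 1))) / (1 - μ)) atTop (𝓝 0) := by
      have := (tendsto_sum_nat_add (fun k : ℕ => (k : ℝ) * p k)).comp
        (tendsto_add_atTop_nat 1)
      have h0 : (0 : ℝ) / (1 - μ) = 0 := by simp
      rw [← h0]
      exact this.div_const _
    refine tendsto_of_tendsto_of_tendsto_of_le_of_le tendsto_const_nhds hT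
      (fun n => mul_nonneg (Nat.cast_nonneg n) (by linarith [(hH n).2])) hub
  -- Part 1
  have part1 : ∀ l : ℕ, Tendsto (fun n : ℕ => H n ^ (n - l)) atTop (𝓝 1) := by
    intro l
    have hlower : Tendsto (fun n : ℕ => 1 - (n : ℝ) * (1 - H n)) atTop (𝓝 1) := by
      have := tendsto_const_nhds (x := (1 : ℝ)) (f := atTop (α := ℕ)) |>.sub key1
      simpa using this
    refine tendsto_of_tendsto_of_tendsto_of_le_of_le hlower tendsto_const_nhds
      (fun n => ?_) (fun n => pow_le_one₀ (hH n).1 (hH n).2)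
    have h1 : 1 - ((n - l : ℕ) : ℝ) * (1 - H n) ≤ H n ^ (n - l) := hbern n (n - l)
    have h2 : ((n - l : ℕ) : ℝ) ≤ (n : ℝ) := by exact_mod_cast Nat.sub_le n l
    have h3 : (0 : ℝ) ≤ 1 - H n := by linarith [(hH n).2]
    nlinarith [mul_le_mul_of_nonneg_right h2 h3]
  refine ⟨part1 ℓ, ?_⟩
  -- Part 2
  set S : ℕ → ℝ := fun n => ∑ m ∈ Finset.range n,
    p m * ∑ j ∈ Finset.range m, H n ^ j * H (n - 1) ^ (m - 1 - j) with hSdef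
  have hσ_nonneg : ∀ n m : ℕ, 0 ≤ ∑ j ∈ Finset.range m, H n ^ j * H (n - 1) ^ (m - 1 - j) :=
    fun n m => Finset.sum_nonneg fun j _ =>
      mul_nonneg (pow_nonneg (hH n).1 _) (pow_nonneg (hH (n - 1)).1 _)
  have hσ_le : ∀ n m : ℕ,
      (∑ j ∈ Finset.range m, H n ^ j * H (n - 1) ^ (m - 1 - j)) ≤ (m : ℝ) := by
    intro n m
    calc (∑ j ∈ Finset.range m, H n ^ j * H (n - 1) ^ (m - 1 - j))
        ≤ ∑ _j ∈ Finset.range m, (1 : ℝ) := Finset.sum_le_sum fun j _ =>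
          mul_le_one₀ (pow_le_one₀ (hH n).1 (hH n).2)
            (pow_nonneg (hH (n - 1)).1 _) (pow_le_one₀ (hH (n - 1)).1 (hH (n - 1)).2)
    _ = (m : ℝ) := by simp
  have hS_nonneg : ∀ n, 0 ≤ S n := fun n =>
    Finset.sum_nonneg fun m _ => mul_nonneg (hp m) (hσ_nonneg n m)
  have hS_le : ∀ n, S n ≤ μ := by
    intro n
    calc S n ≤ ∑ m ∈ Finset.range n, (m : ℝ) * p m := Finset.sum_le_sum fun m _ => by
          have := mul_le_mul_of_nonneg_left (hσ_le n m) (hp m)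
          linarith [this]
    _ ≤ μ := Summable.sum_le_tsum _ (fun i _ => mul_nonneg (Nat.cast_nonneg i) (hp i)) hmeanS
  -- the fixed-point identity
  have hid : ∀ b : ℕ, (H (b + 1) - H b) * (1 - S (b + 1)) = p (b + 1) * H (b + 1) ^ (b + 1) := by
    intro b
    have expand : ∑ m ∈ Finset.range (b + 1), (p m * H (b + 1) ^ m - p m * H b ^ m)
        = S (b + 1) * (H (b + 1) - H b) := by
      rw [hSdef]
      simp only [Finset.sum_mul]
      refine Finset.sum_congr rfl fun m _ => ?_
      have hgeo := geom_sum₂_mul (H (b + 1)) (H b) m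
      have hb1 : b + 1 - 1 = b := rfl
      rw [hb1, mul_assoc, hgeo]
      ring
    have e1 : H (b + 1) = (∑ m ∈ Finset.range (b + 1), p m * H (b + 1) ^ m) +
        p (b + 1) * H (b + 1) ^ (b + 1) := by
      conv_lhs => rw [hfix (b + 1)]
      exact Finset.sum_range_succ _ _
    have e2 := hfix b
    have hsub : ∑ m ∈ Finset.range (b + 1), (p m * H (b + 1) ^ m - p m * H b ^ m)
        = (∑ m ∈ Finset.range (b + 1), p m * H (b + 1) ^ m) -
          ∑ m ∈ Finset.range (b + 1), p m * H b ^ m := Finset.sum_sub_distrib _ _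
    have hkey : H (b + 1) - H b =
        p (b + 1) * H (b + 1) ^ (b + 1) + S (b + 1) * (H (b + 1) - H b) := by
      linarith [expand, hsub]
    linarith [hkey]
  -- S tends to μ
  have hStends : Tendsto S atTop (𝓝 μ) := by
    set F : ℕ → ℕ → ℝ := fun n m => if m < n then
      p m * ∑ j ∈ Finset.range m, H n ^ j * H (n - 1) ^ (m - 1 - j) else 0 with hFdef
    have hSF : ∀ n, S n = ∑' m, F n m := by
      intro n
      rw [tsum_eq_sum (s := Finset.range n)
        (fun m hm => by simp only [hFdef]; rw [if_neg (by simpa using hm)])]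
      exact Finset.sum_congr rfl fun m hm => by
        simp only [hFdef]; rw [if_pos (Finset.mem_range.mp hm)]
    have hμ' : μ = ∑' m : ℕ, (m : ℝ) * p m := rfl
    have main : Tendsto (fun n => ∑' m, F n m) atTop (𝓝 (∑' m : ℕ, (m : ℝ) * p m)) := by
      apply tendsto_tsum_of_dominated_convergence (bound := fun m : ℕ => (m : ℝ) * p m) hmeanS
      · intro m
        have hev : (fun n => p m * ∑ j ∈ Finset.range m, H n ^ j * H (n - 1) ^ (m - 1 - j))
            =ᶠ[atTop] fun n => F n m := by
          filter_upwards [eventually_gt_atTop m] with n hn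
          simp only [hFdef]; rw [if_pos hn]
        have hσt : Tendsto (fun n => ∑ j ∈ Finset.range m,
            H n ^ j * H (n - 1) ^ (m - 1 - j)) atTop (𝓝 (m : ℝ)) := by
          have : Tendsto (fun n => ∑ j ∈ Finset.range m,
              H n ^ j * H (n - 1) ^ (m - 1 - j)) atTop
              (𝓝 (∑ _j ∈ Finset.range m, (1 : ℝ))) := by
            refine tendsto_finset_sum _ fun j _ => ?_
            have h1 : Tendsto (fun n : ℕ => H n ^ j) atTop (𝓝 1) := by
              simpa using hlim.pow j
            have h2 : Tendsto (fun n : ℕ => H (n - 1) ^ (m - 1 - j)) atTop (𝓝 1) := by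
              simpa using (hlim.comp (tendsto_sub_atTop_nat 1)).pow (m - 1 - j)
            simpa using h1.mul h2
          simpa using this
        have : Tendsto (fun n => p m * ∑ j ∈ Finset.range m,
            H n ^ j * H (n - 1) ^ (m - 1 - j)) atTop (𝓝 ((m : ℝ) * p m)) := by
          rw [show (m : ℝ) * p m = p m * (m : ℝ) by ring]
          exact tendsto_const_nhds.mul hσt
        exact this.congr' hev
      · filter_upwards with n
        intro m
        simp only [hFdef]
        split_ifs with h
        · rw [Real.norm_eq_abs, abs_of_nonneg (mul_nonneg (hp m) (hσ_nonneg n m))]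
          have := mul_le_mul_of_nonneg_left (hσ_le n m) (hp m)
          linarith [this]
        · simp [mul_nonneg (Nat.cast_nonneg m) (hp m)]
    rw [hμ']
    exact main.congr fun n => (hSF n).symm
  -- final limit
  set L := atTop ⊓ Filter.principal {n : ℕ | 0 < p n} with hLdef
  have hratio : Tendsto (fun n => (1 - S n) / H n ^ ℓ) atTop (𝓝 (1 - μ)) := by
    have h1 : Tendsto (fun n => 1 - S n) atTop (𝓝 (1 - μ)) :=
      tendsto_const_nhds.sub hStends
    have h2 : Tendsto (fun n => H n ^ ℓ) atTop (𝓝 1) := by simpa using hlim.pow ℓ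
    have h3 := h1.div h2 one_ne_zero
    rw [div_one] at h3
    exact h3
  have hev : (fun n => (1 - S n) / H n ^ ℓ) =ᶠ[L]
      fun n => p n * H n ^ (n - ℓ) / (H n - H (n - 1)) := by
    have e1 : ∀ᶠ n in L, 0 < p n :=
      eventually_inf_principal.mpr (Eventually.of_forall fun n hn => hn)
    have e2 : ∀ᶠ n in L, ℓ + 1 ≤ n := (eventually_ge_atTop (ℓ + 1)).filter_mono inf_le_left
    have e3 : ∀ᶠ n in L, 0 < H n :=
      (hlim.eventually (eventually_gt_nhds (by norm_num : (0 : ℝ) < 1))).filter_mono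
        inf_le_left
    filter_upwards [e1, e2, e3] with n hpn hn hHn
    obtain ⟨b, rfl⟩ : ∃ b, n = b + 1 := ⟨n - 1, by omega⟩
    have hb1 : b + 1 - 1 = b := rfl
    have hidn := hid b
    have hpos : 0 < p (b + 1) * H (b + 1) ^ (b + 1) :=
      mul_pos hpn (pow_pos hHn _)
    have hSn : 0 < 1 - S (b + 1) := by linarith [hS_le (b + 1)]
    have hq : 0 < H (b + 1) - H b := by
      by_contra hq
      push_neg at hq
      nlinarith [hidn]
    have hpow : H (b + 1) ^ (b + 1 - ℓ) * H (b + 1) ^ ℓ = H (b + 1) ^ (b + 1) := by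
      rw [← pow_add, Nat.sub_add_cancel (by omega)]
    rw [hb1, eq_comm, div_eq_div_iff hq.ne' (pow_ne_zero ℓ hHn.ne')]
    calc p (b + 1) * H (b + 1) ^ (b + 1 - ℓ) * H (b + 1) ^ ℓ
        = p (b + 1) * H (b + 1) ^ (b + 1) := by rw [mul_assoc, hpow]
    _ = (H (b + 1) - H b) * (1 - S (b + 1)) := hidn.symm
    _ = (1 - S (b + 1)) * (H (b + 1) - H b) := by ring
  exact ((hratio.mono_left inf_le_left).congr' hev)
end

section
/- Let p be a sub-critical unbounded pmf on ℕ with cdf H of the maximal out-degree as above, q_n = H(n) − H(n−1). Fix ℓ ∈ ℕ and k ∈ ℕ. Then lim_{n→∞} (1/q_n)·Σ_{j=max(ℓ+1,k)}^{n−1} p_j·(H(n)^{j−ℓ} − H(n−1)^{j−ℓ}) = Σ_{j≥max(ℓ+1,k)} (j−ℓ)·p_j, where the limit is along {n : q_n > 0}. -/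
open Filter Topology Finset

/-- Equation (2) of the paper: for a sub-critical unbounded pmf `p` with
maximal-out-degree cdf `H` and `q n = H n − H (n−1)`, for fixed `ℓ, k`,
`(1/q_n)·Σ_{j=max(ℓ+1,k)}^{n−1} p j (H(n)^{j−ℓ} − H(n−1)^{j−ℓ})
  → Σ_{j≥max(ℓ+1,k)} (j−ℓ) p j` along `{n : q n > 0}`. -/
theorem sum_limit (p : ℕ → ℝ) (hp : ∀ k, 0 ≤ p k) (hsum : ∑' k, p k = 1)
    (hmeanS : Summable fun k : ℕ => (k : ℝ) * p k)
    (hmean : ∑' k : ℕ, (k : ℝ) * p k < 1)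
    (hunb : {n : ℕ | 0 < p n}.Infinite)
    (H : ℕ → ℝ) (hH : ∀ n, H n ∈ Set.Icc (0 : ℝ) 1) (hmono : Monotone H)
    (hfix : ∀ n, H n = ∑ m ∈ Finset.range (n + 1), p m * H n ^ m)
    (hlim : Tendsto H atTop (𝓝 1)) (ℓ k : ℕ) :
    Tendsto
      (fun n : ℕ =>
        (∑ j ∈ Finset.Icc (max (ℓ + 1) k) (n - 1),
            p j * (H n ^ (j - ℓ) - H (n - 1) ^ (j - ℓ))) / (H n - H (n - 1)))
      (atTop ⊓ Filter.principal {n : ℕ | 0 < H n - H (n - 1)})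
      (𝓝 (∑' j : ℕ, if max (ℓ + 1) k ≤ j then ((j : ℝ) - ℓ) * p j else 0)) := by
  set M := max (ℓ + 1) k with hM
  set L := atTop ⊓ Filter.principal {n : ℕ | 0 < H n - H (n - 1)} with hL
  set F : ℕ → ℕ → ℝ := fun n j =>
    if M ≤ j ∧ j ≤ n - 1 then
      p j * (H n ^ (j - ℓ) - H (n - 1) ^ (j - ℓ)) / (H n - H (n - 1)) else 0 with hF
  have hH1 : Tendsto (fun n => H (n - 1)) atTop (𝓝 1) :=
    hlim.comp (tendsto_sub_atTop_nat 1)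
  -- limit of the ratio
  have hratio : ∀ m : ℕ, Tendsto
      (fun n => (H n ^ m - H (n - 1) ^ m) / (H n - H (n - 1))) L (𝓝 (m : ℝ)) := by
    intro m
    have heq : (fun n => ∑ i ∈ range m, H n ^ i * H (n - 1) ^ (m - 1 - i)) =ᶠ[L]
        (fun n => (H n ^ m - H (n - 1) ^ m) / (H n - H (n - 1))) := by
      filter_upwards [le_principal_iff.mp inf_le_right] with n hn
      show _ = _
      rw [eq_div_iff (ne_of_gt hn), geom_sum₂_mul]
    have hlim2 : Tendsto (fun n => ∑ i ∈ range m, H n ^ i * H (n - 1) ^ (m - 1 - i))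
        atTop (𝓝 (m : ℝ)) := by
      have := tendsto_finset_sum (range m)
        (fun i _ => ((hlim.pow i).mul (hH1.pow (m - 1 - i))))
      simpa using this
    exact Tendsto.congr' heq (hlim2.mono_left inf_le_left)
  have hb0 : ∀ n, 0 ≤ H n := fun n => (hH n).1
  have hb1 : ∀ n, H n ≤ 1 := fun n => (hH n).2
  -- rewrite the function as a tsum
  have hrw : ∀ n, (∑ j ∈ Finset.Icc M (n - 1),
      p j * (H n ^ (j - ℓ) - H (n - 1) ^ (j - ℓ))) / (H n - H (n - 1))
      = ∑' j, F n j := by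
    intro n
    rw [tsum_eq_sum (s := Finset.Icc M (n - 1)) (by
      intro j hj
      simp only [hF, Finset.mem_Icc, not_and_or] at hj ⊢
      rw [if_neg]; rwa [not_and_or])]
    rw [Finset.sum_div]
    refine Finset.sum_congr rfl fun j hj => ?_
    simp only [Finset.mem_Icc] at hj
    simp [hF, hj.1, hj.2]
  simp only [funext hrw]
  apply tendsto_tsum_of_dominated_convergence (f := F)
    (g := fun j : ℕ => if M ≤ j then ((j : ℝ) - ℓ) * p j else 0)
    (bound := fun j : ℕ => (j : ℝ) * p j) hmeanS
  · intro j
    by_cases hj : M ≤ j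
    · have hjl : ℓ + 1 ≤ j := le_trans (le_max_left _ _) hj
      have heq : (fun n => p j * ((H n ^ (j - ℓ) - H (n - 1) ^ (j - ℓ)) / (H n - H (n - 1)))) =ᶠ[L]
          (fun n => F n j) := by
        have hev : ∀ᶠ n in atTop, j ≤ n - 1 :=
          (eventually_ge_atTop (j + 1)).mono fun n hn => Nat.le_sub_one_of_lt hn
        filter_upwards [hev.filter_mono inf_le_left] with n hn
        show _ = _
        simp [hF, hj, hn, mul_div_assoc]
      rw [if_pos hj]
      have : Tendsto (fun n => p j * ((H n ^ (j - ℓ) - H (n - 1) ^ (j - ℓ)) / (H n - H (n - 1))))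
          L (𝓝 (p j * (j - ℓ : ℕ))) := tendsto_const_nhds.mul (hratio (j - ℓ))
      refine Tendsto.congr' heq (by convert this using 2; push_cast [Nat.le_of_succ_le hjl]; ring)
    · simp only [hF, if_neg hj, hj, if_neg, hj]
      have : ∀ n : ℕ, (if M ≤ j ∧ j ≤ n - 1 then
          p j * (H n ^ (j - ℓ) - H (n - 1) ^ (j - ℓ)) / (H n - H (n - 1)) else 0) = 0 := by
        intro n; rw [if_neg]; tauto
      simpa [this] using tendsto_const_nhds
  · filter_upwards [le_principal_iff.mp inf_le_right] with n hn j
    by_cases hj : M ≤ j ∧ j ≤ n - 1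
    · have hmono' : H (n - 1) ≤ H n := by linarith
      have hpow : H (n - 1) ^ (j - ℓ) ≤ H n ^ (j - ℓ) :=
        pow_le_pow_left₀ (hb0 _) hmono' _
      have hkey : H n ^ (j - ℓ) - H (n - 1) ^ (j - ℓ) ≤ (j - ℓ : ℕ) * (H n - H (n - 1)) := by
        rw [← geom_sum₂_mul]
        have : ∑ i ∈ range (j - ℓ), H n ^ i * H (n - 1) ^ (j - ℓ - 1 - i) ≤ (j - ℓ : ℕ) := by
          calc _ ≤ ∑ _i ∈ range (j - ℓ), (1 : ℝ) := by
                refine Finset.sum_le_sum fun i _ => ?_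
                exact mul_le_one₀ (pow_le_one₀ (hb0 _) (hb1 _))
                        (pow_nonneg (hb0 _) _) (pow_le_one₀ (hb0 _) (hb1 _))
            _ = _ := by simp
        exact mul_le_mul_of_nonneg_right this (le_of_lt hn) |>.trans_eq rfl
      rw [hF]
      simp only [if_pos hj]
      rw [Real.norm_eq_abs, abs_of_nonneg (div_nonneg (mul_nonneg (hp j) (sub_nonneg.2 hpow)) hn.le)]
      rw [div_le_iff₀ hn]
      calc p j * (H n ^ (j - ℓ) - H (n - 1) ^ (j - ℓ))
          ≤ p j * ((j - ℓ : ℕ) * (H n - H (n - 1))) :=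
            mul_le_mul_of_nonneg_left hkey (hp j)
        _ ≤ (j : ℝ) * p j * (H n - H (n - 1)) := by
            have : ((j - ℓ : ℕ) : ℝ) ≤ (j : ℝ) := by
              exact_mod_cast Nat.cast_le.2 (Nat.sub_le j ℓ)
            have h2 : ((j - ℓ : ℕ) : ℝ) * (H n - H (n - 1)) ≤ (j : ℝ) * (H n - H (n - 1)) :=
              mul_le_mul_of_nonneg_right this hn.le
            nlinarith [hp j]
    · rw [hF]; simp only [if_neg hj, norm_zero]
      exact mul_nonneg (Nat.cast_nonneg j) (hp j)
end

section
/- Let p be a critical (μ_p = 1) pmf on ℕ and τ a Galton-Watson tree with offspring distribution p. For any finite tree t, any leaf x of t, and any finite tree s, ℙ(τ = t ⊛ (s, x)) = (1/p_0)·ℙ(τ = t)·ℙ(τ = s), where t ⊛ (s, x) is the tree obtained by grafting s on the leaf x of t. -/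
open Finset

/-- Finite plane trees in Ulam–Harris labelling: a finite set of words of
naturals containing the root, closed under taking parents, and whose children
are labelled `0, …, k−1`. -/
def IsTree (t : Finset (List ℕ)) : Prop :=
  [] ∈ t ∧ ∀ u ∈ t, ∀ (v : List ℕ) (i : ℕ), u = v ++ [i] →
    v ∈ t ∧ ∀ j < i, v ++ [j] ∈ t

/-- The out-degree (number of children) of a vertex `u` in the tree `t`. -/
def outDeg (t : Finset (List ℕ)) (u : List ℕ) : ℕ :=
  (t.filter fun v => v ≠ [] ∧ v.dropLast = u).card

/-- `ℙ(τ = t) = Π_{u∈t} p (k_u(t))`, the Galton-Watson probability of the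
finite tree `t` under offspring distribution `p`. -/
def gwProb (p : ℕ → ℝ) (t : Finset (List ℕ)) : ℝ :=
  ∏ u ∈ t, p (outDeg t u)

/-- The tree `t ⊛ (s, x)` obtained by grafting the tree `s` on the leaf `x`
of the tree `t`. -/
def graft (t s : Finset (List ℕ)) (x : List ℕ) : Finset (List ℕ) :=
  t ∪ s.image fun v => x ++ v

/-- For a critical Galton-Watson tree `τ` with offspring distribution `p`,
for any finite tree `t`, leaf `x` of `t`, and finite tree `s`,
`ℙ(τ = t ⊛ (s,x)) = (1/p 0)·ℙ(τ = t)·ℙ(τ = s)`. -/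
theorem gwProb_graft (p : ℕ → ℝ) (hp : ∀ k, 0 ≤ p k) (hsum : ∑' k, p k = 1)
    (hp0 : 0 < p 0)
    (hmeanS : Summable fun k : ℕ => (k : ℝ) * p k)
    (hcrit : ∑' k : ℕ, (k : ℝ) * p k = 1)
    (t s : Finset (List ℕ)) (ht : IsTree t) (hs : IsTree s)
    (x : List ℕ) (hxt : x ∈ t) (hleaf : outDeg t x = 0) :
    gwProb p (graft t s x) = (1 / p 0) * gwProb p t * gwProb p s := by
  classical
  have hfilt : t.filter (fun v => v ≠ [] ∧ v.dropLast = x) = ∅ :=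
    Finset.card_eq_zero.mp hleaf
  -- no proper descendant of x is in t
  have hdesc : ∀ v : List ℕ, v ≠ [] → x ++ v ∉ t := by
    intro v
    induction v using List.reverseRecOn with
    | nil => simp
    | append_singleton v' i ih =>
      intro _ hmem
      have h1 : x ++ v' ∈ t ∧ _ :=
        ht.2 _ hmem (x ++ v') i (by simp)
      rcases eq_or_ne v' [] with rfl | hv'
      · have hx : x ++ [i] ∈ t.filter fun v => v ≠ [] ∧ v.dropLast = x := by
          simp only [Finset.mem_filter]
          exact ⟨by simpa using hmem, by simp, by simp⟩
        rw [hfilt] at hx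
        exact absurd hx (Finset.notMem_empty _)
      · exact ih hv' h1.1
  have hinj : Function.Injective (fun v : List ℕ => x ++ v) := fun a b h =>
    List.append_cancel_left h
  -- splitting of the grafted tree
  have hdisj : Disjoint (t.erase x) (s.image fun v => x ++ v) := by
    rw [Finset.disjoint_right]
    intro a ha hat
    obtain ⟨v, hv, rfl⟩ := Finset.mem_image.mp ha
    rcases eq_or_ne v [] with rfl | hvne
    · simp at hat
    · exact hdesc v hvne (Finset.mem_of_mem_erase hat)
  have hsplit : graft t s x = (t.erase x) ∪ s.image fun v => x ++ v := by
    unfold graft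
    ext a
    simp only [Finset.mem_union, Finset.mem_erase]
    constructor
    · rintro (ha | ha)
      · rcases eq_or_ne a x with rfl | hax
        · exact Or.inr (Finset.mem_image.mpr ⟨[], hs.1, by simp⟩)
        · exact Or.inl ⟨hax, ha⟩
      · exact Or.inr ha
    · rintro (⟨_, ha⟩ | ha)
      · exact Or.inl ha
      · exact Or.inr ha
  -- out-degrees are preserved
  have hdeg1 : ∀ u ∈ t, u ≠ x → outDeg (graft t s x) u = outDeg t u := by
    intro u hu hux
    unfold outDeg graft
    congr 1
    ext a
    simp only [Finset.mem_filter, Finset.mem_union, Finset.mem_image]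
    constructor
    · rintro ⟨hat | ⟨v, hv, rfl⟩, hne, hdl⟩
      · exact ⟨hat, hne, hdl⟩
      · rcases eq_or_ne v [] with rfl | hvne
        · exact ⟨by simpa using hxt, hne, hdl⟩
        · exfalso
          rw [List.dropLast_append_of_ne_nil (l' := x) hvne] at hdl
          rcases eq_or_ne v.dropLast [] with h0 | h0
          · rw [h0] at hdl; simp at hdl; exact hux hdl.symm
          · exact hdesc v.dropLast h0 (hdl ▸ hu)
    · rintro ⟨hat, hne, hdl⟩
      exact ⟨Or.inl hat, hne, hdl⟩
  have hdeg2 : ∀ w ∈ s, outDeg (graft t s x) (x ++ w) = outDeg s w := by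
    intro w hw
    unfold outDeg graft
    rw [show ((t ∪ s.image fun v => x ++ v).filter
        fun v => v ≠ [] ∧ v.dropLast = x ++ w)
        = (s.filter fun v => v ≠ [] ∧ v.dropLast = w).image fun v => x ++ v from ?_,
      Finset.card_image_of_injective _ hinj]
    ext a
    simp only [Finset.mem_filter, Finset.mem_union, Finset.mem_image]
    constructor
    · rintro ⟨hat | ⟨v, hv, rfl⟩, hne, hdl⟩
      · exfalso
        have := List.dropLast_append_getLast hne
        rw [hdl] at this
        refine hdesc (w ++ [a.getLast hne]) (by simp) ?_
        rw [← List.append_assoc, this]; exact hat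
      · rcases eq_or_ne v [] with rfl | hvne
        · exfalso
          rcases eq_or_ne x [] with rfl | hxne
          · simp at hne
          · have hx1 : 0 < x.length := List.length_pos_iff.mpr hxne
            have := congrArg List.length hdl
            simp only [List.append_nil, List.length_dropLast,
              List.length_append] at this
            omega
        · rw [List.dropLast_append_of_ne_nil (l' := x) hvne] at hdl
          exact ⟨v, ⟨hv, hvne, List.append_cancel_left hdl⟩, rfl⟩
    · rintro ⟨v, ⟨hv, hvne, hdl⟩, rfl⟩
      refine ⟨Or.inr ⟨v, hv, rfl⟩, by simp [hvne], ?_⟩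
      rw [List.dropLast_append_of_ne_nil (l' := x) hvne, hdl]
  -- put everything together
  have key : gwProb p (graft t s x)
      = (∏ u ∈ t.erase x, p (outDeg t u)) * gwProb p s := by
    unfold gwProb
    rw [hsplit, Finset.prod_union hdisj, Finset.prod_image (fun a _ b _ h => hinj h)]
    congr 1
    · refine Finset.prod_congr rfl fun u hu => ?_
      rw [← hsplit, hdeg1 u (Finset.mem_of_mem_erase hu) (Finset.ne_of_mem_erase hu)]
    · refine Finset.prod_congr rfl fun w hw => ?_
      rw [← hsplit, hdeg2 w hw]
  have htprod : gwProb p t = p 0 * ∏ u ∈ t.erase x, p (outDeg t u) := by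
    unfold gwProb
    rw [← Finset.mul_prod_erase t _ hxt, hleaf]
  rw [key, htprod]
  field_simp
end

section
/- Let p be a critical unbounded pmf on ℕ, τ a Galton-Watson tree with offspring distribution p, and M(τ) its maximal out-degree. Then for every finite tree t, every leaf x of t, and every n > M(t) with p_n > 0: ℙ(τ ∈ T(t,x) | M(τ) = n) = (1/p_0)·ℙ(τ = t), where T(t,x) is the set of all trees obtained by grafting some tree on the leaf x of t. -/
open MeasureTheory Finset

/-- Encoding of the Galton-Watson tree: `ω : List ℕ → ℕ` assigns a potential
out-degree to every Ulam–Harris word; `u` belongs to the tree iff each of its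
coordinates is below the out-degree of the corresponding ancestor. -/
def memTree (ω : List ℕ → ℕ) (u : List ℕ) : Prop :=
  ∀ n < u.length, u.getD n 0 < ω (u.take n)

/-- The maximal out-degree `M(τ)` of the tree encoded by `ω`, in `ℕ∞`. -/
noncomputable def maxDeg (ω : List ℕ → ℕ) : ℕ∞ :=
  ⨆ (u : List ℕ) (_ : memTree ω u), (ω u : ℕ∞)

/-- The event `τ ∈ T(t,x)`: the Galton-Watson tree is obtained by grafting
some tree on the leaf `x` of the finite tree `t`, i.e. the out-degree field
agrees with that of `t` at every vertex of `t` other than `x`. -/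
def graftEvent (t : Finset (List ℕ)) (x : List ℕ) : Set (List ℕ → ℕ) :=
  {ω | ∀ u ∈ t, u ≠ x → ω u = outDeg t u}

section Aux

variable {t : Finset (List ℕ)} {x : List ℕ} {ω : List ℕ → ℕ}

lemma gw_concat_mem (ht : IsTree t) {w : List ℕ} {i : ℕ} (h : w ++ [i] ∈ t) :
    i < outDeg t w := by
  have hsub : (Finset.range (i + 1)).image (fun j => w ++ [j]) ⊆
      t.filter fun v => v ≠ [] ∧ v.dropLast = w := by
    intro v hv
    rw [Finset.mem_image] at hv
    obtain ⟨j, hj, rfl⟩ := hv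
    rw [Finset.mem_range, Nat.lt_succ_iff] at hj
    have hjt : w ++ [j] ∈ t := by
      rcases hj.lt_or_eq with hj' | rfl
      · exact (ht.2 _ h _ _ rfl).2 j hj'
      · exact h
    exact Finset.mem_filter.mpr ⟨hjt, by simp, List.dropLast_concat⟩
  have hcard := Finset.card_le_card hsub
  rw [Finset.card_image_of_injective _ (fun a b hab => by
    simpa using List.append_cancel_left hab), Finset.card_range] at hcard
  exact Nat.lt_of_succ_le hcard

lemma gw_mem_concat (ht : IsTree t) {w : List ℕ} (hw : w ∈ t) {i : ℕ}
    (hi : i < outDeg t w) : w ++ [i] ∈ t := by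
  by_contra hni
  have hsub : (t.filter fun v => v ≠ [] ∧ v.dropLast = w) ⊆
      (Finset.range i).image (fun j => w ++ [j]) := by
    intro v hv
    rw [Finset.mem_filter] at hv
    obtain ⟨hvt, hne, hdl⟩ := hv
    have hv' : v = w ++ [v.getLast hne] := by
      conv_lhs => rw [← List.dropLast_append_getLast hne]
      rw [hdl]
    have hjt : w ++ [v.getLast hne] ∈ t := hv' ▸ hvt
    have hji : v.getLast hne < i := by
      rcases lt_trichotomy (v.getLast hne) i with h' | h' | h'
      · exact h'
      · exact absurd (h' ▸ hjt) hni
      · exact absurd ((ht.2 _ hjt _ _ rfl).2 i h') hni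
    rw [Finset.mem_image]
    exact ⟨v.getLast hne, Finset.mem_range.mpr hji, hv'.symm⟩
  have hcard := Finset.card_le_card hsub
  rw [Finset.card_image_of_injective _ (fun a b hab => by
    simpa using List.append_cancel_left hab), Finset.card_range] at hcard
  exact absurd hi (not_lt.mpr hcard)

lemma gw_prefix_mem (ht : IsTree t) : ∀ u ∈ t, ∀ v : List ℕ, v <+: u → v ∈ t := by
  intro u
  induction u using List.reverseRecOn with
  | nil =>
    intro hu v hv
    rwa [List.prefix_nil.mp hv]
  | append_singleton w a ih =>
    intro hu v hv
    rcases List.prefix_concat_iff.mp hv with rfl | hv'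
    · exact hu
    · exact ih (ht.2 _ hu _ _ rfl).1 v hv'

lemma gw_no_desc (ht : IsTree t) (hxt : x ∈ t) (hleaf : outDeg t x = 0)
    {v : List ℕ} (hv : v ≠ []) : x ++ v ∉ t := by
  intro hmem
  have h1 : x ++ [v.head hv] <+: x ++ v :=
    ⟨v.tail, by rw [List.append_assoc, List.singleton_append, List.cons_head_tail]⟩
  have h2 := gw_prefix_mem ht _ hmem _ h1
  have := gw_concat_mem ht h2
  rw [hleaf] at this
  exact Nat.not_lt_zero _ this

lemma memTree_of_prefix (h : memTree ω u) {v : List ℕ} (hv : v <+: u) :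
    memTree ω v := by
  obtain ⟨r, rfl⟩ := hv
  intro k hk
  have hk' : k < (v ++ r).length := by
    rw [List.length_append]; omega
  have h2 := h k hk'
  rwa [List.getD_append _ _ _ _ hk, List.take_append_of_le_length hk.le] at h2

lemma gw_memTree_of_mem (ht : IsTree t) (hxt : x ∈ t) (hleaf : outDeg t x = 0)
    (hA : ∀ u ∈ t, u ≠ x → ω u = outDeg t u) {u : List ℕ} (hu : u ∈ t) :
    memTree ω u := by
  intro k hk
  have htk : u.take k ∈ t := gw_prefix_mem ht u hu _ (List.take_prefix k u)
  have htk1 : u.take (k + 1) ∈ t := gw_prefix_mem ht u hu _ (List.take_prefix _ u)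
  have hne : u.take k ≠ x := by
    intro hx
    have hd : u.drop k ≠ [] := by
      intro h0
      have := congrArg List.length h0
      simp only [List.length_drop, List.length_nil] at this
      omega
    apply gw_no_desc ht hxt hleaf hd
    rw [← hx, List.take_append_drop]
    exact hu
  have hstep : u.take (k + 1) = u.take k ++ [u.getD k 0] := by
    rw [List.getD_eq_getElem u 0 hk, ← List.concat_eq_append]
    exact (List.take_concat_get hk).symm
  rw [hA _ htk hne]
  exact gw_concat_mem ht (hstep ▸ htk1)

lemma gw_memTree_cases (ht : IsTree t) (hxt : x ∈ t) (hleaf : outDeg t x = 0)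
    (hA : ∀ u ∈ t, u ≠ x → ω u = outDeg t u) :
    ∀ u : List ℕ, memTree ω u → u ∈ t ∨ x <+: u := by
  intro u
  induction u using List.reverseRecOn with
  | nil => intro _; exact Or.inl ht.1
  | append_singleton w a ih =>
    intro h
    have hw := memTree_of_prefix h ⟨[a], rfl⟩
    rcases ih hw with hwt | hpre
    · by_cases hwx : w = x
      · exact Or.inr (hwx ▸ ⟨[a], rfl⟩)
      · left
        have hidx := h w.length (by simp)
        rw [List.getD_append_right _ _ _ _ le_rfl, Nat.sub_self, List.take_left] at hidx
        simp only [List.getD_cons_zero] at hidx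
        rw [hA w hwt hwx] at hidx
        exact gw_mem_concat ht hwt hidx
    · exact Or.inr (hpre.trans ⟨[a], rfl⟩)

lemma gw_memTree_append (ht : IsTree t) (hxt : x ∈ t) (hleaf : outDeg t x = 0)
    (hA : ∀ u ∈ t, u ≠ x → ω u = outDeg t u) (v : List ℕ) :
    memTree ω (x ++ v) ↔ memTree (fun w => ω (x ++ w)) v := by
  constructor
  · intro h k hk
    have h2 := h (x.length + k) (by rw [List.length_append]; omega)
    rwa [List.getD_append_right _ _ _ _ (Nat.le_add_right _ _),
      Nat.add_sub_cancel_left, List.take_length_add_append] at h2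
  · intro h k hk
    rw [List.length_append] at hk
    by_cases hk' : k < x.length
    · rw [List.getD_append _ _ _ _ hk', List.take_append_of_le_length hk'.le]
      exact gw_memTree_of_mem ht hxt hleaf hA hxt k hk'
    · push_neg at hk'
      obtain ⟨j, rfl⟩ : ∃ j, k = x.length + j := ⟨k - x.length, by omega⟩
      rw [List.getD_append_right _ _ _ _ (Nat.le_add_right _ _),
        Nat.add_sub_cancel_left, List.take_length_add_append]
      exact h j (by omega)

end Aux

section Aux2

variable {t : Finset (List ℕ)} {x : List ℕ} {ω : List ℕ → ℕ}

lemma gw_maxDeg_iff (ht : IsTree t) (hxt : x ∈ t) (hleaf : outDeg t x = 0)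
    (hA : ∀ u ∈ t, u ≠ x → ω u = outDeg t u) {n : ℕ} (hn : t.sup (outDeg t) < n) :
    maxDeg ω = (n : ℕ∞) ↔ maxDeg (fun w => ω (x ++ w)) = (n : ℕ∞) := by
  set σ : List ℕ → ℕ := fun w => ω (x ++ w) with hσ
  have h1 : maxDeg σ ≤ maxDeg ω := by
    refine iSup₂_le fun v hv => ?_
    exact le_iSup₂_of_le (x ++ v) ((gw_memTree_append ht hxt hleaf hA v).2 hv) le_rfl
  have h2 : maxDeg ω ≤ ((t.sup (outDeg t) : ℕ) : ℕ∞) ⊔ maxDeg σ := by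
    refine iSup₂_le fun u hu => ?_
    rcases gw_memTree_cases ht hxt hleaf hA u hu with hut | ⟨v, rfl⟩
    · by_cases hux : u = x
      · subst hux
        refine le_sup_of_le_right (le_iSup₂_of_le [] (fun k hk => by simp at hk) ?_)
        simp [hσ]
      · rw [hA u hut hux]
        exact le_sup_of_le_left (Nat.cast_le.mpr (Finset.le_sup hut))
    · exact le_sup_of_le_right
        (le_iSup₂_of_le v ((gw_memTree_append ht hxt hleaf hA v).1 hu) le_rfl)
  have hsup : ((t.sup (outDeg t) : ℕ) : ℕ∞) < (n : ℕ∞) := Nat.cast_lt.mpr hn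
  constructor
  · intro h
    refine le_antisymm (h ▸ h1) ?_
    by_contra hlt
    push_neg at hlt
    have hlt2 : maxDeg ω < (n : ℕ∞) := lt_of_le_of_lt h2 (sup_lt_iff.mpr ⟨hsup, hlt⟩)
    exact absurd h hlt2.ne
  · intro h
    exact le_antisymm (le_trans h2 (sup_le hsup.le h.le)) (h ▸ h1)

lemma meas_cylEvent (s : Finset (List ℕ)) (f : List ℕ → ℕ) :
    MeasurableSet {ω : List ℕ → ℕ | ∀ u ∈ s, ω u = f u} := by
  have he : {ω : List ℕ → ℕ | ∀ u ∈ s, ω u = f u} =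
      ⋂ u ∈ (s : Set (List ℕ)), (fun ω : List ℕ → ℕ => ω u) ⁻¹' {f u} := by
    ext ω; simp
  rw [he]
  exact MeasurableSet.biInter s.countable_toSet fun u _ =>
    measurable_pi_apply u (measurableSet_singleton _)

lemma meas_memTree (u : List ℕ) : MeasurableSet {ω : List ℕ → ℕ | memTree ω u} := by
  have he : {ω : List ℕ → ℕ | memTree ω u} =
      ⋂ k ∈ Set.Iio u.length, (fun ω : List ℕ → ℕ => ω (u.take k)) ⁻¹' {m | u.getD k 0 < m} := by
    ext ω; simp [memTree]
  rw [he]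
  exact MeasurableSet.biInter (Set.to_countable _) fun k _ =>
    measurable_pi_apply (u.take k) (by trivial)

lemma maxDeg_le_iff {m : ℕ} : maxDeg ω ≤ (m : ℕ∞) ↔ ∀ u, memTree ω u → ω u ≤ m := by
  simp [maxDeg, iSup₂_le_iff, Nat.cast_le]

lemma meas_maxDeg_le (m : ℕ) : MeasurableSet {ω : List ℕ → ℕ | maxDeg ω ≤ (m : ℕ∞)} := by
  have he : {ω : List ℕ → ℕ | maxDeg ω ≤ (m : ℕ∞)} =
      ⋂ u : List ℕ, ({ω : List ℕ → ℕ | memTree ω u}ᶜ ∪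
        (fun ω : List ℕ → ℕ => ω u) ⁻¹' {k | k ≤ m}) := by
    ext ω
    simp only [Set.mem_setOf_eq, maxDeg_le_iff, Set.mem_iInter, Set.mem_union,
      Set.mem_compl_iff, Set.mem_preimage]
    exact ⟨fun h u => or_iff_not_imp_left.mpr fun h2 => h u (not_not.mp h2),
      fun h u hu => (h u).resolve_left (not_not.mpr hu)⟩
  rw [he]
  exact MeasurableSet.iInter fun u =>
    (meas_memTree u).compl.union (measurable_pi_apply u (by trivial))

lemma meas_B (n : ℕ) (hn : 0 < n) :
    MeasurableSet {ω : List ℕ → ℕ | maxDeg ω = (n : ℕ∞)} := by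
  have he : {ω : List ℕ → ℕ | maxDeg ω = (n : ℕ∞)} =
      {ω : List ℕ → ℕ | maxDeg ω ≤ (n : ℕ∞)} \
        {ω : List ℕ → ℕ | maxDeg ω ≤ ((n - 1 : ℕ) : ℕ∞)} := by
    ext ω
    simp only [Set.mem_setOf_eq, Set.mem_diff]
    constructor
    · intro h
      refine ⟨h.le, fun hle => ?_⟩
      rw [h] at hle
      have := Nat.cast_le.mp hle
      omega
    · rintro ⟨hle1, h2⟩
      refine le_antisymm hle1 ?_
      have h3 : ((n - 1 : ℕ) : ℕ∞) < maxDeg ω := lt_of_not_ge h2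
      have h4 := Order.add_one_le_of_lt h3
      calc (n : ℕ∞) = ((n - 1 + 1 : ℕ) : ℕ∞) := by congr 1; omega
        _ = ((n - 1 : ℕ) : ℕ∞) + 1 := by push_cast; ring
        _ ≤ maxDeg ω := h4
  rw [he]
  exact (meas_maxDeg_le n).diff (meas_maxDeg_le (n - 1))

lemma meas_shift (x : List ℕ) :
    Measurable (fun ω : List ℕ → ℕ => fun v : List ℕ => ω (x ++ v)) :=
  measurable_pi_lambda _ fun v => measurable_pi_apply (x ++ v)

end Aux2

section Aux3

open MeasureTheory

lemma gw_indep (μ : Measure (List ℕ → ℕ)) [IsProbabilityMeasure μ] (p : ℕ → ℝ)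
    (hcyl : ∀ (s : Finset (List ℕ)) (f : List ℕ → ℕ),
      μ {ω | ∀ u ∈ s, ω u = f u} = ∏ u ∈ s, ENNReal.ofReal (p (f u)))
    (F : Finset (List ℕ)) (c : List ℕ → ℕ) (x : List ℕ)
    (hdis : ∀ u : List ℕ, x ++ u ∉ F) {C : Set (List ℕ → ℕ)} (hC : MeasurableSet C) :
    μ ({ω | ∀ u ∈ F, ω u = c u} ∩
        (fun ω : List ℕ → ℕ => fun v : List ℕ => ω (x ++ v)) ⁻¹' C) =
      μ {ω | ∀ u ∈ F, ω u = c u} * μ C := by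
  classical
  set A : Set (List ℕ → ℕ) := {ω | ∀ u ∈ F, ω u = c u} with hAdef
  have hAm : MeasurableSet A := meas_cylEvent F c
  set T : (List ℕ → ℕ) → (List ℕ → ℕ) := fun ω => fun v => ω (x ++ v) with hT
  refine MeasurableSpace.induction_on_inter
    (C := fun D _ => μ (A ∩ T ⁻¹' D) = μ A * μ D)
    generateFrom_measurableCylinders.symm isPiSystem_measurableCylinders ?_ ?_ ?_ ?_ _ hC
  · simp
  · intro D hD
    rw [mem_measurableCylinders] at hD
    obtain ⟨s, S, hS, rfl⟩ := hD
    set cyl1 : (∀ _ : s, ℕ) → Set (List ℕ → ℕ) := fun f => cylinder s {f} with hcyl1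
    have hsingle : ∀ f : (∀ _ : s, ℕ),
        μ (A ∩ T ⁻¹' cyl1 f) = μ A * μ (cyl1 f) := by
      intro f
      simp only [hcyl1]
      set g : List ℕ → ℕ := fun u => if h : u ∈ s then f ⟨u, h⟩ else 0 with hg
      have hgf : ∀ (u) (hu : u ∈ s), g u = f ⟨u, hu⟩ := fun u hu => dif_pos hu
      have hcylf : (cylinder s {f} : Set (List ℕ → ℕ)) = {ω | ∀ u ∈ s, ω u = g u} := by
        ext ω
        simp only [mem_cylinder, Set.mem_singleton_iff, funext_iff, Set.mem_setOf_eq]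
        constructor
        · intro h u hu
          rw [hgf u hu]
          exact h ⟨u, hu⟩
        · intro h i
          rw [← hgf i i.2]
          exact h i i.2
      have hpre : T ⁻¹' {ω : List ℕ → ℕ | ∀ u ∈ s, ω u = g u} =
          {ω : List ℕ → ℕ | ∀ w ∈ s.image (fun u => x ++ u), ω w = g (w.drop x.length)} := by
        ext ω
        simp only [Set.mem_preimage, Set.mem_setOf_eq, Finset.mem_image, hT]
        constructor
        · rintro h w ⟨u, hu, rfl⟩
          rw [List.drop_left]
          exact h u hu
        · intro h u hu
          have h2 := h (x ++ u) ⟨u, hu, rfl⟩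
          rwa [List.drop_left] at h2
      set img := s.image (fun u => x ++ u) with himg
      have hdisj : Disjoint F img := by
        rw [Finset.disjoint_right]
        intro w hw
        rw [himg, Finset.mem_image] at hw
        obtain ⟨u, hu, rfl⟩ := hw
        exact hdis u
      set h2 : List ℕ → ℕ := fun w => if w ∈ F then c w else g (w.drop x.length) with hh2
      have hinter : A ∩ {ω : List ℕ → ℕ | ∀ w ∈ img, ω w = g (w.drop x.length)} =
          {ω : List ℕ → ℕ | ∀ w ∈ F ∪ img, ω w = h2 w} := by
        ext ω
        simp only [hAdef, Set.mem_inter_iff, Set.mem_setOf_eq, Finset.mem_union]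
        constructor
        · rintro ⟨hFh, hI⟩ w hw
          rcases hw with hw | hw
          · simp only [hh2]; rw [if_pos hw]
            exact hFh w hw
          · simp only [hh2]; rw [if_neg (Finset.disjoint_right.mp hdisj hw)]
            exact hI w hw
        · intro h
          constructor
          · intro w hw
            have := h w (Or.inl hw)
            simp only [hh2] at this; rwa [if_pos hw] at this
          · intro w hw
            have := h w (Or.inr hw)
            simp only [hh2] at this; rwa [if_neg (Finset.disjoint_right.mp hdisj hw)] at this
      have e1 : ∏ w ∈ F, ENNReal.ofReal (p (h2 w)) = μ A := by
        rw [hAdef, hcyl F c]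
        exact Finset.prod_congr rfl fun w hw => by simp only [hh2]; rw [if_pos hw]
      have e2 : ∏ w ∈ img, ENNReal.ofReal (p (h2 w)) = μ (cylinder s {f}) := by
        rw [hcylf, hcyl s g, himg,
          Finset.prod_image (fun a _ b _ hab => List.append_cancel_left hab)]
        refine Finset.prod_congr rfl fun u hu => ?_
        simp only [hh2]; rw [if_neg (hdis u), List.drop_left]
      rw [hcylf, hpre, hinter, hcyl _ h2, Finset.prod_union hdisj, e1, e2, ← hcylf]
    have hdecomp : (cylinder s S : Set (List ℕ → ℕ)) = ⋃ f : S, cyl1 f := by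
      ext ω
      simp only [hcyl1, mem_cylinder, Set.mem_iUnion, Set.mem_singleton_iff]
      exact ⟨fun h => ⟨⟨_, h⟩, rfl⟩, fun ⟨f, hf⟩ => hf ▸ f.2⟩
    have hcount : Countable S := S.to_countable
    have hmeas : ∀ f : S, MeasurableSet (cyl1 f) :=
      fun f => MeasurableSet.cylinder s (measurableSet_singleton _)
    have hdisj2 : Pairwise (Function.onFun Disjoint fun f : S => cyl1 f) := by
      intro f g hfg
      refine Set.disjoint_left.mpr fun ω h1 h2 => ?_
      simp only [hcyl1, mem_cylinder, Set.mem_singleton_iff] at h1 h2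
      exact hfg (Subtype.ext (h1.symm.trans h2))
    have hdisj1 : Pairwise (Function.onFun Disjoint
        fun f : S => A ∩ T ⁻¹' cyl1 f) := by
      intro f g hfg
      exact (((hdisj2 hfg).preimage T).mono inf_le_right inf_le_right)
    calc μ (A ∩ T ⁻¹' cylinder s S)
        = μ (⋃ f : S, A ∩ T ⁻¹' cyl1 f) := by
          rw [hdecomp, Set.preimage_iUnion, Set.inter_iUnion]
      _ = ∑' f : S, μ (A ∩ T ⁻¹' cyl1 f) :=
          measure_iUnion hdisj1 fun f => hAm.inter ((meas_shift x) (hmeas f))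
      _ = ∑' f : S, μ A * μ (cyl1 f) := tsum_congr fun f => hsingle f
      _ = μ A * ∑' f : S, μ (cyl1 f) := ENNReal.tsum_mul_left
      _ = μ A * μ (⋃ f : S, cyl1 f) := by
          rw [measure_iUnion hdisj2 hmeas]
      _ = μ A * μ (cylinder s S) := by rw [← hdecomp]
  · intro D hD hind
    have key1 : μ A * μ D + μ (A ∩ T ⁻¹' Dᶜ) = μ A := by
      rw [← hind]
      have h2 := measure_inter_add_diff (μ := μ) A ((meas_shift x) hD)
      rw [Set.diff_eq] at h2
      rw [Set.preimage_compl]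
      exact h2
    have key2 : μ A * μ D + μ A * μ Dᶜ = μ A := by
      rw [← mul_add, measure_add_measure_compl hD, measure_univ, mul_one]
    exact (ENNReal.add_right_inj
      (ENNReal.mul_ne_top (measure_ne_top μ A) (measure_ne_top μ D))).mp
      (key1.trans key2.symm)
  · intro f hdisjf hmeasf hind
    rw [Set.preimage_iUnion, Set.inter_iUnion]
    have hd' : Pairwise (Function.onFun Disjoint fun i => A ∩ T ⁻¹' f i) := fun i j hij =>
      ((hdisjf hij).preimage T).mono inf_le_right inf_le_right
    calc μ (⋃ i, A ∩ T ⁻¹' f i) = ∑' i, μ (A ∩ T ⁻¹' f i) :=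
          measure_iUnion hd' fun i => hAm.inter ((meas_shift x) (hmeasf i))
      _ = ∑' i, μ A * μ (f i) := tsum_congr hind
      _ = μ A * ∑' i, μ (f i) := ENNReal.tsum_mul_left
      _ = μ A * μ (⋃ i, f i) := by rw [measure_iUnion hdisjf hmeasf]

end Aux3

section Aux4

open MeasureTheory

lemma gw_pos (μ : Measure (List ℕ → ℕ)) [IsProbabilityMeasure μ] (p : ℕ → ℝ)
    (hp : ∀ k, 0 ≤ p k)
    (hcyl : ∀ (s : Finset (List ℕ)) (f : List ℕ → ℕ),
      μ {ω | ∀ u ∈ s, ω u = f u} = ∏ u ∈ s, ENNReal.ofReal (p (f u)))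
    (n : ℕ) (hn : 0 < n) (hpn : 0 < p n) (hp0 : 0 < p 0) :
    μ {ω : List ℕ → ℕ | maxDeg ω = (n : ℕ∞)} ≠ 0 := by
  classical
  set s₀ : Finset (List ℕ) := insert [] ((Finset.range n).image fun i => [i]) with hs₀
  set e : List ℕ → ℕ := fun u => if u = [] then n else 0 with he
  have hsub : {ω : List ℕ → ℕ | ∀ u ∈ s₀, ω u = e u} ⊆
      {ω : List ℕ → ℕ | maxDeg ω = (n : ℕ∞)} := by
    intro ω hω
    simp only [Set.mem_setOf_eq] at hω ⊢
    have hω0 : ω [] = n := by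
      have := hω [] (Finset.mem_insert_self _ _)
      simpa [he] using this
    have hωi : ∀ i < n, ω [i] = 0 := by
      intro i hi
      have := hω [i] (Finset.mem_insert_of_mem
        (Finset.mem_image.mpr ⟨i, Finset.mem_range.mpr hi, rfl⟩))
      simpa [he] using this
    refine le_antisymm ?_ ?_
    · refine iSup₂_le fun u hu => ?_
      match u with
      | [] =>
        rw [hω0]
      | [i] =>
        have hi : i < n := by
          have := hu 0 (by simp)
          simpa [hω0] using this
        rw [hωi i hi]
        exact_mod_cast Nat.zero_le n
      | i :: j :: v =>
        exfalso
        have h0 := hu 0 (by simp)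
        have h1 := hu 1 (by simp)
        simp only [List.getD_cons_zero, List.take_zero] at h0
        simp only [List.getD_cons_succ, List.getD_cons_zero] at h1
        have hi : i < n := by rwa [hω0] at h0
        rw [show (i :: j :: v).take 1 = [i] from rfl, hωi i hi] at h1
        exact Nat.not_lt_zero _ h1
    · refine le_iSup₂_of_le [] (fun k hk => by simp at hk) ?_
      rw [hω0]
  intro h0
  have hle : μ {ω : List ℕ → ℕ | ∀ u ∈ s₀, ω u = e u} = 0 :=
    le_antisymm (h0 ▸ measure_mono hsub) zero_le
  rw [hcyl s₀ e] at hle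
  obtain ⟨u, hu, hu0⟩ := Finset.prod_eq_zero_iff.mp hle
  rw [ENNReal.ofReal_eq_zero] at hu0
  by_cases h : u = []
  · subst h
    simp only [he, if_pos rfl] at hu0
    linarith
  · simp only [he, if_neg h] at hu0
    linarith

lemma p0_pos (p : ℕ → ℝ) (hp : ∀ k, 0 ≤ p k) (hsum : ∑' k, p k = 1)
    (hmeanS : Summable fun k : ℕ => (k : ℝ) * p k)
    (hcrit : ∑' k : ℕ, (k : ℝ) * p k = 1)
    (hunb : {n : ℕ | 0 < p n}.Infinite) : 0 < p 0 := by
  by_contra h0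
  have hp0 : p 0 = 0 := le_antisymm (not_lt.mp h0) (hp 0)
  have hpsum : Summable p := by
    by_contra h
    rw [tsum_eq_zero_of_not_summable h] at hsum
    norm_num at hsum
  obtain ⟨m, hm, hm2⟩ : ∃ m, 0 < p m ∧ 2 ≤ m := by
    by_contra h
    push_neg at h
    apply hunb
    apply Set.Finite.subset (Set.finite_Iio 2)
    intro k hk
    by_contra hk2
    simp only [Set.mem_Iio, not_lt] at hk2
    exact absurd (h k hk) (not_lt.mpr hk2)
  have hdiff : ∑' k : ℕ, ((k : ℝ) * p k - p k) = 0 := by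
    rw [Summable.tsum_sub hmeanS hpsum, hcrit, hsum]
    ring
  have hnonneg : ∀ k : ℕ, 0 ≤ (k : ℝ) * p k - p k := by
    intro k
    rcases Nat.eq_zero_or_pos k with rfl | hk
    · simp [hp0]
    · have h1 : (1 : ℝ) ≤ (k : ℝ) := by exact_mod_cast hk
      nlinarith [hp k]
  have hterm := Summable.le_tsum (hmeanS.sub hpsum) m fun j _ => hnonneg j
  rw [hdiff] at hterm
  have hm2' : (2 : ℝ) ≤ (m : ℝ) := by exact_mod_cast hm2
  nlinarith

end Aux4

/-- For a critical unbounded offspring distribution `p`, a finite tree `t`, a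
leaf `x` of `t` and `n > M(t)` with `p n > 0`:
`ℙ(τ ∈ T(t,x) | M(τ) = n) = (1/p 0)·ℙ(τ = t)`. -/
theorem conditioned_graft_probability (p : ℕ → ℝ) (hp : ∀ k, 0 ≤ p k)
    (hsum : ∑' k, p k = 1)
    (hmeanS : Summable fun k : ℕ => (k : ℝ) * p k)
    (hcrit : ∑' k : ℕ, (k : ℝ) * p k = 1)
    (hunb : {n : ℕ | 0 < p n}.Infinite)
    (μ : Measure (List ℕ → ℕ)) [IsProbabilityMeasure μ]
    (hcyl : ∀ (s : Finset (List ℕ)) (f : List ℕ → ℕ),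
      μ {ω | ∀ u ∈ s, ω u = f u} = ∏ u ∈ s, ENNReal.ofReal (p (f u)))
    (t : Finset (List ℕ)) (ht : IsTree t) (x : List ℕ) (hxt : x ∈ t)
    (hleaf : outDeg t x = 0) (n : ℕ) (hn : t.sup (outDeg t) < n)
    (hpn : 0 < p n) :
    μ (graftEvent t x ∩ {ω | maxDeg ω = (n : ℕ∞)}) /
        μ {ω | maxDeg ω = (n : ℕ∞)} =
      ENNReal.ofReal ((1 / p 0) * ∏ u ∈ t, p (outDeg t u)) := by

  classical
  set F := t.erase x with hF
  have hAeq : graftEvent t x = {ω : List ℕ → ℕ | ∀ u ∈ F, ω u = outDeg t u} := by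
    ext ω
    constructor
    · intro h u hu
      rw [hF, Finset.mem_erase] at hu
      exact h u hu.2 hu.1
    · intro h u hu hux
      exact h u (by rw [hF, Finset.mem_erase]; exact ⟨hux, hu⟩)
  have hdis : ∀ u : List ℕ, x ++ u ∉ F := by
    intro u hu
    rw [hF, Finset.mem_erase] at hu
    obtain ⟨hne, hmem⟩ := hu
    rcases eq_or_ne u [] with rfl | hu0
    · exact hne (by simp)
    · exact gw_no_desc ht hxt hleaf hu0 hmem
  have hn0 : 0 < n := lt_of_le_of_lt (Nat.zero_le _) hn
  have hBmeas := meas_B n hn0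
  set B := {ω : List ℕ → ℕ | maxDeg ω = (n : ℕ∞)} with hBdef
  have hABeq : graftEvent t x ∩ B = graftEvent t x ∩
      (fun ω : List ℕ → ℕ => fun v : List ℕ => ω (x ++ v)) ⁻¹' B := by
    ext ω
    simp only [Set.mem_inter_iff, Set.mem_preimage, hBdef, Set.mem_setOf_eq]
    constructor
    · rintro ⟨h1, h2⟩
      exact ⟨h1, (gw_maxDeg_iff ht hxt hleaf h1 hn).mp h2⟩
    · rintro ⟨h1, h2⟩
      exact ⟨h1, (gw_maxDeg_iff ht hxt hleaf h1 hn).mpr h2⟩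
  have hkey := gw_indep μ p hcyl F (outDeg t) x hdis hBmeas
  rw [hABeq, hAeq, hkey]
  have hp0 : 0 < p 0 := p0_pos p hp hsum hmeanS hcrit hunb
  have hB0 : μ B ≠ 0 := gw_pos μ p hp hcyl n hn0 hpn hp0
  rw [mul_div_assoc, ENNReal.div_self hB0 (measure_ne_top μ B), mul_one,
    hcyl F (outDeg t), ← ENNReal.ofReal_prod_of_nonneg fun u _ => hp _]
  congr 1
  rw [← Finset.mul_prod_erase t (fun u => p (outDeg t u)) hxt, hleaf, ← hF,
    ← mul_assoc, one_div, inv_mul_cancel₀ hp0.ne', one_mul]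
end
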